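/- arXiv:1808.01428 — 7 statements merged into one kernel-verified Lean document; each statement's English description precedes it below -/
import Mathlib

section
/- Let G be a group, let S ⊆ G be inverse-closed with 1 ∉ S, and let Γ = Cay(G,S) have girth strictly greater than 4. Suppose a ∈ S has finite order m with m > 2. Then the girth of Γ is at most m, and moreover aⁱ ∉ S for every integer i with 1 < i < m−1; consequently, for every b ∈ G the right coset ⟨a⟩b induces an m-cycle in Γ, so the vertices of Γ are partitioned into induced m-cycles. -/
/-- The Cayley graph of a group `G` with connection set `S`. When `S` is inverse-closed
and does not contain `1`, distinct `a b` are adjacent iff `a * b⁻¹ ∈ S`. -/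
def cayleyGraph {G : Type*} [Group G] (S : Set G) : SimpleGraph G where
  Adj a b := a ≠ b ∧ a * b⁻¹ ∈ S ∧ b * a⁻¹ ∈ S
  symm := ⟨fun a b h => ⟨h.1.symm, h.2.2, h.2.1⟩⟩
  loopless := ⟨fun a h => h.1 rfl⟩

section Aux

variable {V : Type*} (G : SimpleGraph V)

lemma egirth_le_of_cycle {v : V} (w : G.Walk v v) (h : w.IsCycle) :
    G.egirth ≤ w.length := by
  rw [SimpleGraph.egirth]
  exact iInf_le_of_le v (iInf_le_of_le w (iInf_le_of_le h le_rfl))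

lemma exists_walk_of_chain (f : ℕ → V) (n : ℕ)
    (hadj : ∀ i, i + 1 ≤ n → G.Adj (f i) (f (i + 1))) :
    ∃ w : G.Walk (f 0) (f n), w.length = n ∧ w.support = (List.range (n + 1)).map f ∧
      w.edges = (List.range n).map (fun i => s(f i, f (i + 1))) := by
  induction n with
  | zero => exact ⟨.nil, rfl, rfl, rfl⟩
  | succ n ih =>
    obtain ⟨w, hl, hs, he⟩ := ih (fun i hi => hadj i (by omega))
    refine ⟨w.concat (hadj n le_rfl), ?_, ?_, ?_⟩
    · rw [SimpleGraph.Walk.length_concat, hl]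
    · rw [SimpleGraph.Walk.support_concat, hs]
      simp [List.range_succ]
    · rw [SimpleGraph.Walk.edges_concat, he]
      simp [List.range_succ]

lemma exists_cycle_of_chain (f : ℕ → V) (n : ℕ) (h3 : 3 ≤ n)
    (hinj : ∀ i < n, ∀ j < n, f i = f j → i = j)
    (hadj : ∀ i, i + 1 < n → G.Adj (f i) (f (i + 1)))
    (hlast : G.Adj (f 0) (f (n - 1))) :
    ∃ w : G.Walk (f 0) (f 0), w.IsCycle ∧ w.length = n := by
  obtain ⟨p, hl, hs, he⟩ := exists_walk_of_chain G f (n - 1) (fun i hi => hadj i (by omega))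
  refine ⟨SimpleGraph.Walk.cons hlast p.reverse, ?_, ?_⟩
  · rw [SimpleGraph.Walk.cons_isCycle_iff]
    constructor
    · rw [SimpleGraph.Walk.isPath_reverse_iff, SimpleGraph.Walk.isPath_def, hs]
      refine List.Nodup.map_on ?_ List.nodup_range
      intro i hi j hj hf
      exact hinj i (by simp at hi; omega) j (by simp at hj; omega) hf
    · rw [SimpleGraph.Walk.edges_reverse, List.mem_reverse, he]
      intro hmem
      simp only [List.mem_map, List.mem_range] at hmem
      obtain ⟨i, hi, hei⟩ := hmem
      rw [Sym2.eq_iff] at hei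
      rcases hei with ⟨h1, h2⟩ | ⟨h1, h2⟩
      · have e1 : i = 0 := hinj i (by omega) 0 (by omega) h1
        have e2 : i + 1 = n - 1 := hinj (i + 1) (by omega) (n - 1) (by omega) h2
        omega
      · have e1 : i = n - 1 := hinj i (by omega) (n - 1) (by omega) h1
        have e2 : i + 1 = 0 := hinj (i + 1) (by omega) 0 (by omega) h2
        omega
  · rw [SimpleGraph.Walk.length_cons, SimpleGraph.Walk.length_reverse, hl]
    omega

end Aux

/-- If `Cay(G, S)` has girth `> 4` and `a ∈ S` has finite order `m > 2`, then the girth is at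
most `m`, no proper intermediate power of `a` lies in `S`, and every right coset `⟨a⟩b`
induces an `m`-cycle; hence the vertices are partitioned into induced `m`-cycles. -/
theorem stmt_2 {G : Type*} [Group G] (S : Set G)
    (hS : ∀ s ∈ S, s⁻¹ ∈ S) (h1 : (1 : G) ∉ S)
    (hgirth : 4 < (cayleyGraph S).egirth)
    (a : G) (ha : a ∈ S) (m : ℕ) (hm : orderOf a = m) (hm2 : 2 < m) :
    (cayleyGraph S).egirth ≤ m ∧
    (∀ i : ℕ, 1 < i → i < m - 1 → a ^ i ∉ S) ∧
    ∀ b : G, Nonempty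
      ((cayleyGraph S).induce {x : G | ∃ j : ℕ, x = a ^ j * b} ≃g SimpleGraph.cycleGraph m) := by
  have hmpos : 0 < m := by omega
  haveI : NeZero m := ⟨by omega⟩
  -- injectivity of powers below the order
  have hinj : ∀ i < m, ∀ j < m, a ^ i = a ^ j → i = j := by
    intro i hi j hj hij
    exact pow_injOn_Iio_orderOf (by simpa [hm] using hi) (by simpa [hm] using hj) hij
  have hSinv : ∀ s : G, s ∈ S ↔ s⁻¹ ∈ S := fun s =>
    ⟨hS s, fun h => by simpa using hS _ h⟩
  have hainvmem : a⁻¹ ∈ S := hS a ha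
  have ham : a ^ m = 1 := by rw [← hm]; exact pow_orderOf_eq_one a
  have hm1inv : a ^ (m - 1) = a⁻¹ := by
    apply eq_inv_of_mul_eq_one_left
    rw [← pow_succ, show m - 1 + 1 = m by omega, ham]
  have hm1mem : a ^ (m - 1) ∈ S := hm1inv ▸ hainvmem
  -- basic adjacency helper
  have hadjpow : ∀ p d : ℕ, 0 < d → p + d < m → a ^ d ∈ S →
      (cayleyGraph S).Adj (a ^ p) (a ^ (p + d)) := by
    intro p d hd hpd hdS
    have hsplit : a ^ (p + d) = a ^ d * a ^ p := by rw [← pow_add, Nat.add_comm]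
    refine ⟨fun h => ?_, ?_, ?_⟩
    · have := hinj p (by omega) (p + d) hpd h
      omega
    · simpa [hsplit, mul_inv_rev, mul_assoc] using hS _ hdS
    · simpa [hsplit, mul_assoc] using hdS
  -- Part 2: no intermediate power lies in S
  have part2 : ∀ i : ℕ, 1 < i → i < m - 1 → a ^ i ∉ S := by
    intro i hi1 hi2 hiS
    -- build a 4-cycle 1, a, a^(i+1), a^i
    set e : ℕ → ℕ := fun k => if k = 0 then 0 else if k = 1 then 1 else if k = 2 then i + 1 else i
      with he
    obtain ⟨w, hw, hwl⟩ := exists_cycle_of_chain (cayleyGraph S) (fun k => a ^ e k) 4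
      (by omega)
      (by
        intro k hk l hl hf
        have hbk : e k < m := by simp only [he]; split_ifs <;> omega
        have hbl : e l < m := by simp only [he]; split_ifs <;> omega
        have := hinj (e k) hbk (e l) hbl hf
        have hk' : k = 0 ∨ k = 1 ∨ k = 2 ∨ k = 3 := by omega
        have hl' : l = 0 ∨ l = 1 ∨ l = 2 ∨ l = 3 := by omega
        rcases hk' with rfl | rfl | rfl | rfl <;> rcases hl' with rfl | rfl | rfl | rfl <;>
          simp [he] at this ⊢ <;> omega)
      (by
        intro k hk
        have hk' : k = 0 ∨ k = 1 ∨ k = 2 := by omega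
        rcases hk' with rfl | rfl | rfl
        · simpa [he] using hadjpow 0 1 (by omega) (by omega) (by simpa using ha)
        · simpa [he, Nat.add_comm] using hadjpow 1 i (by omega) (by omega) hiS
        · have := (hadjpow i 1 (by omega) (by omega) (by simpa using ha)).symm
          simpa [he, Nat.add_comm] using this)
      (by simpa [he] using hadjpow 0 i (by omega) (by omega) hiS)
    have h4 : (cayleyGraph S).egirth ≤ 4 := by
      have := egirth_le_of_cycle (cayleyGraph S) w hw
      rwa [hwl] at this
    exact absurd h4 (by exact not_le.mpr hgirth)
  -- Part 1: egirth ≤ m via the m-cycle 1, a, a², …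
  have part1 : (cayleyGraph S).egirth ≤ m := by
    obtain ⟨w, hw, hwl⟩ := exists_cycle_of_chain (cayleyGraph S) (fun k => a ^ k) m
      (by omega) (fun i hi j hj => hinj i hi j hj)
      (by
        intro k hk
        simpa using hadjpow k 1 (by omega) (by omega) (by simpa using ha))
      (by simpa using hadjpow 0 (m - 1) (by omega) (by omega) hm1mem)
    have := egirth_le_of_cycle (cayleyGraph S) w hw
    rwa [hwl] at this
  -- characterization of powers in S
  have hSpow : ∀ d : ℕ, d < m → (a ^ d ∈ S ↔ d = 1 ∨ d = m - 1) := by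
    intro d hd
    constructor
    · intro hdS
      by_contra hcon
      push_neg at hcon
      rcases Nat.eq_zero_or_pos d with rfl | hdpos
      · exact h1 (by simpa using hdS)
      · exact part2 d (by omega) (by omega) hdS
    · rintro (rfl | rfl)
      · simpa using ha
      · exact hm1mem
  -- Fin m arithmetic for powers
  have hadd : ∀ j k : Fin m, a ^ (j + k).val = a ^ j.val * a ^ k.val := by
    intro j k
    rw [← pow_add, Fin.val_add]
    have hmm : (j.val + k.val) % m = (j.val + k.val) % orderOf a := by rw [hm]
    rw [hmm, pow_mod_orderOf]
  have hsub : ∀ j k : Fin m, a ^ (j - k).val = a ^ j.val * (a ^ k.val)⁻¹ := by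
    intro j k
    have h' := hadd (j - k) k
    rw [sub_add_cancel] at h'
    rw [eq_comm, mul_inv_eq_iff_eq_mul]
    exact h'
  have hneg : ∀ d : Fin m, a ^ (-d).val = (a ^ d.val)⁻¹ := by
    intro d
    have h0 := hsub 0 d
    rw [zero_sub] at h0
    simpa using h0
  have hvalone : ∀ d : Fin m, a ^ d.val = a → d.val = 1 :=
    fun d h => hinj d.val d.isLt 1 (by omega) (by simpa using h)
  -- the adjacency characterization on a coset
  have hadjiff : ∀ (b : G) (j k : Fin m),
      (cayleyGraph S).Adj (a ^ j.val * b) (a ^ k.val * b) ↔ (SimpleGraph.cycleGraph m).Adj j k := by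
    intro b j k
    rw [SimpleGraph.cycleGraph_adj']
    have hne : a ^ j.val * b ≠ a ^ k.val * b ↔ j ≠ k := by
      constructor
      · intro h hjk; exact h (by rw [hjk])
      · intro h hc
        exact h (Fin.ext (hinj j.val j.isLt k.val k.isLt (by
          have := mul_right_cancel hc
          exact this)))
    have hprod : (a ^ j.val * b) * (a ^ k.val * b)⁻¹ = a ^ (j - k).val := by
      rw [hsub]; group
    have hprod' : (a ^ k.val * b) * (a ^ j.val * b)⁻¹ = a ^ (k - j).val := by
      rw [hsub]; group
    show (_ ≠ _ ∧ _ ∈ S ∧ _ ∈ S) ↔ _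
    rw [hne, hprod, hprod']
    constructor
    · rintro ⟨hjk, hjkS, hkjS⟩
      rcases (hSpow _ (j - k).isLt).mp hjkS with h' | h'
      · exact Or.inl h'
      · refine Or.inr (hvalone _ ?_)
        have : a ^ (k - j).val = (a ^ (j - k).val)⁻¹ := by
          rw [show k - j = -(j - k) from (neg_sub j k).symm, hneg]
        rw [this, h', hm1inv, inv_inv]
    · rintro (h' | h')
      · have hjk : j ≠ k := by
          intro hc
          rw [hc, sub_self] at h'
          simp at h'
        refine ⟨hjk, ?_, ?_⟩
        · rw [h']; simpa using ha
        · have : a ^ (k - j).val = (a ^ (j - k).val)⁻¹ := by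
            rw [show k - j = -(j - k) from (neg_sub j k).symm, hneg]
          rw [this, h']
          simpa using hainvmem
      · have hjk : j ≠ k := by
          intro hc
          rw [hc, sub_self] at h'
          simp at h'
        refine ⟨hjk, ?_, ?_⟩
        · have : a ^ (j - k).val = (a ^ (k - j).val)⁻¹ := by
            rw [show j - k = -(k - j) from (neg_sub k j).symm, hneg]
          rw [this, h']
          simpa using hainvmem
        · rw [h']; simpa using ha
    
  refine ⟨part1, part2, ?_⟩
  intro b
  set C : Set G := {x : G | ∃ j : ℕ, x = a ^ j * b} with hC
  have hmemC : ∀ j : Fin m, a ^ j.val * b ∈ C := fun j => ⟨j.val, rfl⟩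
  let f : Fin m → C := fun j => ⟨a ^ j.val * b, hmemC j⟩
  let g : C → Fin m := fun x => ⟨Classical.choose x.2 % m, Nat.mod_lt _ hmpos⟩
  have hgf : ∀ j, g (f j) = j := by
    intro j
    have hspec := Classical.choose_spec (f j).2
    apply Fin.ext
    show Classical.choose (f j).2 % m = j.val
    have : a ^ j.val = a ^ Classical.choose (f j).2 := mul_right_cancel hspec
    have hmod := pow_eq_pow_iff_modEq.mp this
    rw [hm] at hmod
    have h2 : Classical.choose (f j).2 % m = j.val % m := hmod.symm
    rw [h2, Nat.mod_eq_of_lt j.isLt]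
  have hfg : ∀ x, f (g x) = x := by
    intro x
    have hspec := Classical.choose_spec x.2
    apply Subtype.ext
    show a ^ (Classical.choose x.2 % m) * b = (x : G)
    rw [← hm, pow_mod_orderOf]
    exact hspec.symm
  let e : Fin m ≃ C := ⟨f, g, hgf, hfg⟩
  refine ⟨(RelIso.mk e ?_ : SimpleGraph.cycleGraph m ≃g (cayleyGraph S).induce C).symm⟩
  intro j k
  show (cayleyGraph S).Adj (a ^ j.val * b) (a ^ k.val * b) ↔ _
  exact hadjiff b j k
end

section
/- For every finite group G of order 45 and every inverse-closed subset S ⊆ G with 1 ∉ S and |S| = 4, the Cayley graph Cay(G,S) is not distance-regular with intersection array {4,2,2,2; 1,1,1,2}. Equivalently, the line graph of Tutte's 8-cage — the unique distance-regular graph with intersection array {4,2,2,2; 1,1,1,2}, which has 45 vertices — is not a Cayley graph. -/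
/-- `Γ.IsDRGWith b c` means that `Γ` is a distance-regular graph with intersection array
`{b₀, …, b_{d-1}; c₁, …, c_d}`, where `d` is the diameter of `Γ`. -/
def SimpleGraph.IsDRGWith {V : Type*} (Γ : SimpleGraph V) (b c : List ℕ) : Prop :=
  Γ.Connected ∧ c.length = b.length ∧
  (∀ x y : V, Γ.dist x y ≤ b.length) ∧
  (∃ x y : V, Γ.dist x y = b.length) ∧
  ∀ (i : ℕ) (x y : V), Γ.dist x y = i →
    (i < b.length → {z : V | Γ.Adj y z ∧ Γ.dist x z = i + 1}.ncard = b.getD i 0) ∧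
    (1 ≤ i → {z : V | Γ.Adj y z ∧ Γ.dist x z = i - 1}.ncard = c.getD (i - 1) 0)

lemma prime_dvd_45' {p : ℕ} (hp : p.Prime) (h : p ∣ 45) : p = 3 ∨ p = 5 := by
  have h45 : p ≤ 45 := Nat.le_of_dvd (by norm_num) h
  have h2 := hp.two_le
  interval_cases p <;> revert hp h <;> decide

lemma sylow_card45 {G : Type*} [Group G] (hcard : Nat.card G = 45)
    {p : ℕ} [hp : Fact p.Prime] (P : Sylow p G) (hdvd : p ∣ 45) :
    (p = 3 ∧ Nat.card P = 9) ∨ (p = 5 ∧ Nat.card P = 5) := by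
  have : Finite G := Nat.finite_of_card_ne_zero (by omega)
  have h45 : Nat.card P ∣ 45 := hcard ▸ Subgroup.card_subgroup_dvd_card (P : Subgroup G)
  obtain ⟨k, hk⟩ := IsPGroup.iff_card.mp P.isPGroup'
  rcases prime_dvd_45' hp.out hdvd with rfl | rfl
  · have h9 : 3 ^ 2 ∣ Nat.card P :=
      P.pow_dvd_card_of_pow_dvd_card (by rw [hcard]; norm_num)
    rw [hk] at h45 h9 ⊢
    have hle : 3 ^ k ≤ 45 := Nat.le_of_dvd (by norm_num) h45
    have hk3 : k ≤ 3 := by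
      by_contra hgt
      have : 3 ^ 4 ≤ 3 ^ k := Nat.pow_le_pow_right (by norm_num) (by omega)
      omega
    interval_cases k <;> revert h45 h9 <;> norm_num
  · have h5 : 5 ^ 1 ∣ Nat.card P :=
      P.pow_dvd_card_of_pow_dvd_card (by rw [hcard]; norm_num)
    rw [hk] at h45 h5 ⊢
    have hle : 5 ^ k ≤ 45 := Nat.le_of_dvd (by norm_num) h45
    have hk2 : k ≤ 2 := by
      by_contra hgt
      have : 5 ^ 3 ≤ 5 ^ k := Nat.pow_le_pow_right (by norm_num) (by omega)
      omega
    interval_cases k <;> revert h45 h5 <;> norm_num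

/-- Every group of order 45 is abelian. -/
lemma comm45 {G : Type*} [Group G] [Fintype G] (hG : Fintype.card G = 45) :
    ∀ x y : G, x * y = y * x := by
  have hcard : Nat.card G = 45 := by rw [Nat.card_eq_fintype_card, hG]
  have hn : ∀ {p : ℕ} [Fact p.Prime] (P : Sylow p G), (P : Subgroup G).Normal := by
    intro p hp P
    by_cases hdvd : p ∣ 45
    · have hidx : Nat.card P * (P : Subgroup G).index = 45 := by
        rw [Subgroup.card_mul_index, hcard]
      have hdvdidx : Nat.card (Sylow p G) ∣ (P : Subgroup G).index := P.card_dvd_index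
      have hmod : Nat.card (Sylow p G) % p = 1 % p := card_sylow_modEq_one p G
      have h1 : Nat.card (Sylow p G) = 1 := by
        rcases sylow_card45 hcard P hdvd with ⟨rfl, hcP⟩ | ⟨rfl, hcP⟩
        · rw [hcP] at hidx
          have hidx' : (P : Subgroup G).index = 5 := by omega
          rw [hidx'] at hdvdidx
          have hle := Nat.le_of_dvd (by norm_num) hdvdidx
          interval_cases h : Nat.card (Sylow 3 G) <;> omega
        · rw [hcP] at hidx
          have hidx' : (P : Subgroup G).index = 9 := by omega
          rw [hidx'] at hdvdidx
          have hle := Nat.le_of_dvd (by norm_num) hdvdidx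
          interval_cases h : Nat.card (Sylow 5 G) <;> omega
      have : (Subgroup.normalizer (P : Set G)).index = 1 := by
        rw [← P.card_eq_index_normalizer, h1]
      exact Subgroup.normalizer_eq_top_iff.mp (Subgroup.index_eq_one.mp this)
    · have hcP : Nat.card P = 1 := by
        rw [Sylow.card_eq_multiplicity, hcard,
          Nat.factorization_eq_zero_of_not_dvd hdvd, pow_zero]
      have : (P : Subgroup G) = ⊥ := Subgroup.eq_bot_of_card_eq _ hcP
      rw [this]; infer_instance
  let e := Sylow.directProductOfNormal hn
  intro x y
  obtain ⟨x', rfl⟩ := e.surjective x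
  obtain ⟨y', rfl⟩ := e.surjective y
  rw [← map_mul, ← map_mul]
  congr 1
  funext p P
  show x' p P * y' p P = y' p P * x' p P
  have hp' : Fact (p : ℕ).Prime := ⟨Nat.prime_of_mem_primeFactors p.2⟩
  have hdvd : (p : ℕ) ∣ 45 := by
    rw [← hcard]
    exact Nat.dvd_of_mem_primeFactors p.2
  rcases sylow_card45 hcard P hdvd with ⟨hp3, hcP⟩ | ⟨hp5, hcP⟩
  · have : Fact (Nat.Prime 3) := ⟨by norm_num⟩
    exact IsPGroup.commutative_of_card_eq_prime_sq (p := 3)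
      (show Nat.card P = 3 ^ 2 by rw [hcP]; norm_num) _ _
  · have : Fact (Nat.Prime 5) := ⟨by norm_num⟩
    have hcyc : IsCyclic P := isCyclic_of_prime_card (p := 5) (show Nat.card P = 5 from hcP)
    letI := hcyc.commGroup
    exact mul_comm _ _

/-- In a group of order 45, `x ^ n = 1` with `gcd n 45 = 1` forces `x = 1`. -/
lemma pow45 {G : Type*} [Group G] [Fintype G] (hG : Fintype.card G = 45)
    {x : G} {n : ℕ} (hn : Nat.gcd n 45 = 1) (h : x ^ n = 1) : x = 1 := by
  have h1 : orderOf x ∣ n := orderOf_dvd_of_pow_eq_one h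
  have h2 : orderOf x ∣ 45 := by
    have h4 := orderOf_dvd_card (x := x)
    rwa [hG] at h4
  have h3 : orderOf x ∣ Nat.gcd n 45 := Nat.dvd_gcd h1 h2
  rw [hn, Nat.dvd_one] at h3
  exact orderOf_eq_one_iff.mp h3

/-- The μ = 1 contradiction: two elements of S whose product is outside S ∪ {1}. -/
lemma lemA {G : Type*} [Group G] [Fintype G] (S : Set G)
    (hS : ∀ s ∈ S, s⁻¹ ∈ S) (h1 : (1 : G) ∉ S)
    (comm : ∀ x y : G, x * y = y * x)
    (hD : (cayleyGraph S).IsDRGWith [4, 2, 2, 2] [1, 1, 1, 2])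
    {s t : G} (hs : s ∈ S) (ht : t ∈ S) (hne : s ≠ t)
    (h1' : s * t ≠ 1) (hstS : s * t ∉ S) : False := by
  obtain ⟨hconn, -, -, -, hmain⟩ := hD
  set Γ := cayleyGraph S with hΓ
  have hadj : ∀ x y : G, Γ.Adj x y ↔ x ≠ y ∧ x * y⁻¹ ∈ S ∧ y * x⁻¹ ∈ S := fun _ _ => Iff.rfl
  have hs1 : s ≠ 1 := fun h => h1 (h ▸ hs)
  have ht1 : t ≠ 1 := fun h => h1 (h ▸ ht)
  have a1s : Γ.Adj 1 s :=
    (hadj _ _).mpr ⟨fun h => hs1 h.symm, by simpa using hS s hs, by simpa using hs⟩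
  have a1t : Γ.Adj 1 t :=
    (hadj _ _).mpr ⟨fun h => ht1 h.symm, by simpa using hS t ht, by simpa using ht⟩
  have ast : Γ.Adj s (s * t) := by
    refine (hadj _ _).mpr ⟨?_, ?_, ?_⟩
    · intro h
      exact ht1 (mul_left_cancel (a := s) (by rw [mul_one, ← h])).symm
    · have : s * (s * t)⁻¹ = t⁻¹ := by rw [comm s t]; group
      rw [this]; exact hS t ht
    · have : (s * t) * s⁻¹ = t := by rw [comm s t]; group
      rw [this]; exact ht
  have att : Γ.Adj (s * t) t := by
    refine (hadj _ _).mpr ⟨?_, ?_, ?_⟩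
    · intro h
      exact hs1 (mul_right_cancel (b := t) (by rw [one_mul, h]))
    · have : (s * t) * t⁻¹ = s := by group
      rw [this]; exact hs
    · have : t * (s * t)⁻¹ = s⁻¹ := by group
      rw [this]; exact hS s hs
  have hne1 : (1 : G) ≠ s * t := fun h => h1' h.symm
  have hdist : Γ.dist 1 (s * t) = 2 := by
    have hle : Γ.dist 1 (s * t) ≤ 2 := by
      have := Γ.dist_le (SimpleGraph.Walk.cons a1s (SimpleGraph.Walk.cons ast
        SimpleGraph.Walk.nil))
      simpa using this
    have hpos : 0 < Γ.dist 1 (s * t) := hconn.pos_dist_of_ne hne1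
    have hne1' : Γ.dist 1 (s * t) ≠ 1 := by
      intro h
      exact hstS (by simpa using (SimpleGraph.dist_eq_one_iff_adj.mp h).2.2)
    omega
  have hkey := (hmain 2 1 (s * t) hdist).2 (by norm_num)
  rw [show (2 : ℕ) - 1 = 1 from rfl] at hkey
  have hgetD : ([1, 1, 1, 2] : List ℕ).getD 1 0 = 1 := rfl
  rw [hgetD] at hkey
  have hsub : ({s, t} : Set G) ⊆ {z : G | Γ.Adj (s * t) z ∧ Γ.dist 1 z = 1} := by
    intro z hz
    rcases hz with rfl | hz
    · exact ⟨ast.symm, SimpleGraph.dist_eq_one_iff_adj.mpr a1s⟩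
    · rcases hz with rfl
      exact ⟨att, SimpleGraph.dist_eq_one_iff_adj.mpr a1t⟩
  have hle2 := Set.ncard_le_ncard hsub (Set.toFinite _)
  rw [Set.ncard_pair hne, hkey] at hle2
  omega

/-- Disconnectedness contradiction when `S` lies in a proper cyclic subgroup. -/
lemma lemB {G : Type*} [Group G] [Fintype G] (S : Set G)
    (hG : Fintype.card G = 45) {a : G} (ha1 : a ≠ 1) (ha5 : a ^ 5 = 1)
    (hsub : S ⊆ (Subgroup.zpowers a : Set G))
    (hconn : (cayleyGraph S).Connected) : False := by
  set H := Subgroup.zpowers a with hH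
  have key : ∀ (x y : G) (w : (cayleyGraph S).Walk x y), x ∈ H → y ∈ H := by
    intro x y w
    induction w with
    | nil => exact id
    | @cons u v _ h _ ih =>
      intro hx
      apply ih
      obtain ⟨-, -, hz⟩ := h
      have hv : v = (v * u⁻¹) * u := by group
      rw [hv]
      exact H.mul_mem (hsub hz) hx
  have hall : ∀ g : G, g ∈ H := fun g =>
    key 1 g (hconn.preconnected 1 g).some (one_mem H)
  have htop : H = ⊤ := (Subgroup.eq_top_iff' H).mpr hall
  have h45 : Nat.card H = 45 := by
    rw [htop, Subgroup.card_top, Nat.card_eq_fintype_card, hG]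
  have ho : orderOf a = 45 := by rw [← Nat.card_zpowers]; exact h45
  have hdvd : orderOf a ∣ 5 := orderOf_dvd_of_pow_eq_one ha5
  rw [ho] at hdvd
  omega

/-- The line graph of Tutte's 8-cage (the unique distance-regular graph with intersection
array {4,2,2,2; 1,1,1,2}, on 45 vertices) is not a Cayley graph. -/
theorem stmt_4 {G : Type*} [Group G] [Fintype G] (S : Set G)
    (hS : ∀ s ∈ S, s⁻¹ ∈ S) (h1 : (1 : G) ∉ S)
    (hG : Fintype.card G = 45) (hcard : S.ncard = 4) :
    ¬ (cayleyGraph S).IsDRGWith [4, 2, 2, 2] [1, 1, 1, 2] := by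
  intro hD
  have hconn := hD.1
  have comm := comm45 hG
  have hne1 : ∀ x ∈ S, x ≠ 1 := fun x hx h => h1 (h ▸ hx)
  have hnotinv : ∀ x ∈ S, x ≠ x⁻¹ := by
    intro x hx h
    apply hne1 x hx
    apply pow45 hG (n := 2) (by norm_num)
    rw [pow_two]
    nth_rewrite 2 [h]
    simp
  -- choose a
  obtain ⟨a, haS⟩ := Set.nonempty_of_ncard_ne_zero (s := S) (by rw [hcard]; norm_num)
  have haI : a⁻¹ ∈ S := hS a haS
  have ha1 : a ≠ 1 := hne1 a haS
  have haai : a ≠ a⁻¹ := hnotinv a haS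
  -- choose b
  have hd : (S \ {a, a⁻¹}).ncard ≠ 0 := by
    have h2 : ({a, a⁻¹} : Set G).ncard ≤ 2 := by
      have := Set.ncard_insert_le a ({a⁻¹} : Set G)
      simpa [Set.ncard_singleton] using this
    have h3 := Set.ncard_le_ncard_diff_add_ncard S ({a, a⁻¹} : Set G) (Set.toFinite _)
    omega
  obtain ⟨b, hbmem⟩ := Set.nonempty_of_ncard_ne_zero hd
  have hbS : b ∈ S := hbmem.1
  have hba : b ≠ a := by
    intro h; exact hbmem.2 (by simp [h])
  have hbai : b ≠ a⁻¹ := by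
    intro h; exact hbmem.2 (by simp [h])
  have hbI : b⁻¹ ∈ S := hS b hbS
  have hb1 : b ≠ 1 := hne1 b hbS
  have hbbi : b ≠ b⁻¹ := hnotinv b hbS
  have hbia : b⁻¹ ≠ a := fun h => hbai (by rw [← h, inv_inv])
  have hbiai : b⁻¹ ≠ a⁻¹ := fun h => hba (inv_injective h)
  have hab1 : a * b ≠ 1 := by
    intro h
    apply hbai
    have hb2 : b = a⁻¹ * (a * b) := by group
    rw [h, mul_one] at hb2
    exact hb2
  by_cases habS : a * b ∈ S
  · -- S = {a, a⁻¹, b, b⁻¹}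
    have hsub4 : ({a, a⁻¹, b, b⁻¹} : Set G) ⊆ S := by
      intro x hx
      rcases hx with rfl | rfl | rfl | rfl <;> assumption
    have hq4 : ({a, a⁻¹, b, b⁻¹} : Set G).ncard = 4 := by
      rw [Set.ncard_insert_of_notMem (by simp [haai, hba.symm, hbia.symm]),
        Set.ncard_insert_of_notMem (by simp [hbai.symm, hbiai.symm]),
        Set.ncard_insert_of_notMem (by simp [hbbi]),
        Set.ncard_singleton]
    have hSeq : ({a, a⁻¹, b, b⁻¹} : Set G) = S :=
      Set.eq_of_subset_of_ncard_le hsub4 (by rw [hcard, hq4]) (Set.toFinite S)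
    have hmemS : ∀ x, x ∈ S → x = a ∨ x = a⁻¹ ∨ x = b ∨ x = b⁻¹ := by
      intro x hx
      have : x ∈ ({a, a⁻¹, b, b⁻¹} : Set G) := by rw [hSeq]; exact hx
      simpa using this
    rcases hmemS _ habS with h | h | h | h
    · -- a*b = a → b = 1
      exact hb1 (mul_left_cancel (a := a) (by rw [mul_one, h]))
    · -- a*b = a⁻¹ → b = a⁻¹ * a⁻¹
      have hb : b = a⁻¹ * a⁻¹ := by
        calc b = a⁻¹ * (a * b) := by group
          _ = a⁻¹ * a⁻¹ := by rw [h]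
      have hinvb1 : a⁻¹ * b ≠ 1 := by
        intro h'
        apply hba
        have hb2 : b = a * (a⁻¹ * b) := by group
        rw [h', mul_one] at hb2
        exact hb2
      by_cases h3 : a⁻¹ * b ∈ S
      · rcases hmemS _ h3 with h' | h' | h' | h'
        · -- a⁻¹ * b = a, with b = a⁻¹ a⁻¹ : a^4 = 1
          rw [hb] at h'
          have h4 : a ^ 4 = 1 := by
            calc a ^ 4 = (a⁻¹ * (a⁻¹ * a⁻¹))⁻¹ * a := by group
              _ = a⁻¹ * a := by rw [h']
              _ = 1 := by group
          exact ha1 (pow45 hG (n := 4) (by norm_num) h4)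
        ·
          rw [hb] at h'
          have h4 : a ^ 2 = 1 := by
            calc a ^ 2 = (a⁻¹ * (a⁻¹ * a⁻¹))⁻¹ * a⁻¹ := by group
              _ = a⁻¹⁻¹ * a⁻¹ := by rw [h']
              _ = 1 := by group
          exact ha1 (pow45 hG (n := 2) (by norm_num) h4)
        · -- a⁻¹ * b = b → a⁻¹ = 1
          exact ha1 (by
            have := mul_right_cancel (b := b) (by rw [one_mul, h'] : a⁻¹ * b = 1 * b)
            rw [← inv_inv a, this, inv_one])
        · -- a⁻¹ * b = b⁻¹, b = a⁻² : a⁻³ = a² → a^5 = 1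
          rw [hb] at h'
          have h5 : a ^ 5 = 1 := by
            calc a ^ 5 = (a⁻¹ * (a⁻¹ * a⁻¹))⁻¹ * (a⁻¹ * a⁻¹)⁻¹ := by group
              _ = (a⁻¹ * a⁻¹)⁻¹⁻¹ * (a⁻¹ * a⁻¹)⁻¹ := by rw [h']
              _ = 1 := by group
          refine lemB S hG ha1 h5 ?_ hconn
          intro x hx
          have hza : a ∈ Subgroup.zpowers a := Subgroup.mem_zpowers a
          rcases hmemS _ hx with rfl | rfl | rfl | rfl
          · exact hza
          · exact Subgroup.inv_mem _ hza
          · rw [hb]; exact Subgroup.mul_mem _ (Subgroup.inv_mem _ hza) (Subgroup.inv_mem _ hza)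
          · rw [hb]; exact Subgroup.inv_mem _ (Subgroup.mul_mem _ (Subgroup.inv_mem _ hza) (Subgroup.inv_mem _ hza))
      · exact lemA S hS h1 comm hD haI hbS (Ne.symm hbai) hinvb1 h3
    · -- a*b = b → a = 1
      exact ha1 (mul_right_cancel (b := b) (by rw [one_mul, h]))
    · -- a*b = b⁻¹ → a = b⁻¹ * b⁻¹
      have hA : a = b⁻¹ * b⁻¹ := by
        calc a = (a * b) * b⁻¹ := by group
          _ = b⁻¹ * b⁻¹ := by rw [h]
      have hinvb1 : b⁻¹ * a ≠ 1 := by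
        intro h'
        apply hba.symm
        have hb2 : a = b * (b⁻¹ * a) := by group
        rw [h', mul_one] at hb2
        exact hb2
      by_cases h3 : b⁻¹ * a ∈ S
      · rcases hmemS _ h3 with h' | h' | h' | h'
        · -- b⁻¹ * a = a → b⁻¹ = 1
          exact hb1 (by
            have := mul_right_cancel (b := a) (by rw [one_mul, h'] : b⁻¹ * a = 1 * a)
            rw [← inv_inv b, this, inv_one])
        · -- b⁻¹ * a = a⁻¹, a = b⁻² : b⁻³ = b² → b^5 = 1
          rw [hA] at h'
          have h5 : b ^ 5 = 1 := by
            calc b ^ 5 = (b⁻¹ * (b⁻¹ * b⁻¹))⁻¹ * (b⁻¹ * b⁻¹)⁻¹ := by group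
              _ = (b⁻¹ * b⁻¹)⁻¹⁻¹ * (b⁻¹ * b⁻¹)⁻¹ := by rw [h']
              _ = 1 := by group
          refine lemB S hG hb1 h5 ?_ hconn
          intro x hx
          have hzb : b ∈ Subgroup.zpowers b := Subgroup.mem_zpowers b
          rcases hmemS _ hx with rfl | rfl | rfl | rfl
          · rw [hA]; exact Subgroup.mul_mem _ (Subgroup.inv_mem _ hzb) (Subgroup.inv_mem _ hzb)
          · rw [hA]; exact Subgroup.inv_mem _ (Subgroup.mul_mem _ (Subgroup.inv_mem _ hzb) (Subgroup.inv_mem _ hzb))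
          · exact hzb
          · exact Subgroup.inv_mem _ hzb
        · -- b⁻¹ * a = b : b⁻³ = b → b^4 = 1
          rw [hA] at h'
          have h4 : b ^ 4 = 1 := by
            calc b ^ 4 = (b⁻¹ * (b⁻¹ * b⁻¹))⁻¹ * b := by group
              _ = b⁻¹ * b := by rw [h']
              _ = 1 := by group
          exact hb1 (pow45 hG (n := 4) (by norm_num) h4)
        · -- b⁻¹ * a = b⁻¹ : b⁻³ = b⁻¹ → b² = 1
          rw [hA] at h'
          have h4 : b ^ 2 = 1 := by
            calc b ^ 2 = (b⁻¹ * (b⁻¹ * b⁻¹))⁻¹ * b⁻¹ := by group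
              _ = b⁻¹⁻¹ * b⁻¹ := by rw [h']
              _ = 1 := by group
          exact hb1 (pow45 hG (n := 2) (by norm_num) h4)
      · exact lemA S hS h1 comm hD hbI haS hbia hinvb1 h3
  · exact lemA S hS h1 comm hD haS hbS (Ne.symm hba) hab1 habS
end

section
/- Let Γ be a simple graph whose girth is strictly greater than 10, and let a group G act on the vertex set of Γ by graph automorphisms, with the action free (g•x = x for some vertex x only if g is the identity). If g ∈ G has order 2, 3, or 5, then for every vertex x the vertices x and g•x are distinct and have no common neighbor in Γ. -/
open SimpleGraph

/-- Let `Γ` be a simple graph of girth strictly greater than `10`, and let a group `G` act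
freely on its vertices by graph automorphisms. If `g ∈ G` has order `2`, `3`, or `5`, then for
every vertex `x`, the vertices `x` and `g • x` are distinct and have no common neighbor. -/
theorem stmt_6 {V : Type*} (Γ : SimpleGraph V) (hgirth : 10 < Γ.egirth)
    {G : Type*} [Group G] [MulAction G V]
    (hact : ∀ (g : G) (x y : V), Γ.Adj x y → Γ.Adj (g • x) (g • y))
    (hfree : ∀ (g : G) (x : V), g • x = x → g = 1)
    (g : G) (horder : orderOf g = 2 ∨ orderOf g = 3 ∨ orderOf g = 5) :
    ∀ x : V, g • x ≠ x ∧ ∀ z : V, ¬ (Γ.Adj x z ∧ Γ.Adj (g • x) z) := by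
  have hbound : ∀ (a : V) (w : Γ.Walk a a), w.IsCycle → w.length ≤ 10 → False := by
    intro a w hc hlen
    have hle := le_egirth.mp le_rfl a w hc
    have hlt : (10 : ℕ∞) < (w.length : ℕ∞) := lt_of_lt_of_le hgirth hle
    have : (10 : ℕ) < w.length := by exact_mod_cast hlt
    omega
  have hvx : ∀ (a b : G) (y : V), a • y = b • y → a = b := by
    intro a b y e
    have h1 : (b⁻¹ * a) • y = y := by rw [mul_smul, e, inv_smul_smul]
    exact (eq_of_inv_mul_eq_one (hfree _ _ h1)).symm
  have hpowne : ∀ (h : G) (i j : ℕ), i < j → j < orderOf h → h ^ i ≠ h ^ j := by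
    intro h i j hij hj e
    have h1 : h ^ (j - i) = 1 := by
      rw [pow_sub h hij.le, ← e, mul_inv_cancel]
    have := Nat.le_of_dvd (by omega) (orderOf_dvd_of_pow_eq_one h1)
    omega
  have hvne : ∀ (h : G) (i j : ℕ) (y : V), i < j → j < orderOf h → h ^ i • y ≠ h ^ j • y := by
    intro h i j y hij hj e
    exact hpowne h i j hij hj (hvx _ _ _ e)
  have horb : ∀ (h : G), orderOf h = 3 ∨ orderOf h = 5 → ∀ y : V, ¬ Γ.Adj y (h • y) := by
    intro h hord y hadj
    have hstep : ∀ k : ℕ, Γ.Adj (h ^ k • y) (h ^ (k + 1) • y) := by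
      intro k
      have := hact (h ^ k) _ _ hadj
      rwa [smul_smul, ← pow_succ] at this
    rcases hord with hq | hq
    · -- order 3
      have f0 : Γ.Adj (y) (h • y) := by simpa using hstep 0
      have f1 : Γ.Adj (h • y) (h ^ 2 • y) := by simpa using hstep 1
      have fL : Γ.Adj (h ^ 2 • y) y := by
        have := hstep 2
        rw [show (2:ℕ)+1 = 3 from rfl, show h ^ 3 = 1 by rw [← hq, pow_orderOf_eq_one], one_smul] at this
        simpa using this
      have e0_1 : (y) ≠ (h • y) := by simpa using hvne h 0 1 y (by omega) (by rw [hq]; omega)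
      have e0_2 : (y) ≠ (h ^ 2 • y) := by simpa using hvne h 0 2 y (by omega) (by rw [hq]; omega)
      have e1_2 : (h • y) ≠ (h ^ 2 • y) := by simpa using hvne h 1 2 y (by omega) (by rw [hq]; omega)
      have hc : (Walk.cons f0 (.cons f1 (.cons fL (.nil)))).IsCycle := by
        simp [Walk.isCycle_def, Walk.isTrail_def, Sym2.eq_iff, e0_1, e0_2, e1_2, e0_1.symm, e0_2.symm, e1_2.symm]
      exact hbound y _ hc (by simp)
    · -- order 5
      have f0 : Γ.Adj (y) (h • y) := by simpa using hstep 0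
      have f1 : Γ.Adj (h • y) (h ^ 2 • y) := by simpa using hstep 1
      have f2 : Γ.Adj (h ^ 2 • y) (h ^ 3 • y) := by simpa using hstep 2
      have f3 : Γ.Adj (h ^ 3 • y) (h ^ 4 • y) := by simpa using hstep 3
      have fL : Γ.Adj (h ^ 4 • y) y := by
        have := hstep 4
        rw [show (4:ℕ)+1 = 5 from rfl, show h ^ 5 = 1 by rw [← hq, pow_orderOf_eq_one], one_smul] at this
        simpa using this
      have e0_1 : (y) ≠ (h • y) := by simpa using hvne h 0 1 y (by omega) (by rw [hq]; omega)
      have e0_2 : (y) ≠ (h ^ 2 • y) := by simpa using hvne h 0 2 y (by omega) (by rw [hq]; omega)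
      have e0_3 : (y) ≠ (h ^ 3 • y) := by simpa using hvne h 0 3 y (by omega) (by rw [hq]; omega)
      have e0_4 : (y) ≠ (h ^ 4 • y) := by simpa using hvne h 0 4 y (by omega) (by rw [hq]; omega)
      have e1_2 : (h • y) ≠ (h ^ 2 • y) := by simpa using hvne h 1 2 y (by omega) (by rw [hq]; omega)
      have e1_3 : (h • y) ≠ (h ^ 3 • y) := by simpa using hvne h 1 3 y (by omega) (by rw [hq]; omega)
      have e1_4 : (h • y) ≠ (h ^ 4 • y) := by simpa using hvne h 1 4 y (by omega) (by rw [hq]; omega)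
      have e2_3 : (h ^ 2 • y) ≠ (h ^ 3 • y) := by simpa using hvne h 2 3 y (by omega) (by rw [hq]; omega)
      have e2_4 : (h ^ 2 • y) ≠ (h ^ 4 • y) := by simpa using hvne h 2 4 y (by omega) (by rw [hq]; omega)
      have e3_4 : (h ^ 3 • y) ≠ (h ^ 4 • y) := by simpa using hvne h 3 4 y (by omega) (by rw [hq]; omega)
      have hc : (Walk.cons f0 (.cons f1 (.cons f2 (.cons f3 (.cons fL (.nil)))))).IsCycle := by
        simp [Walk.isCycle_def, Walk.isTrail_def, Sym2.eq_iff, e0_1, e0_2, e0_3, e0_4, e1_2, e1_3, e1_4, e2_3, e2_4, e3_4, e0_1.symm, e0_2.symm, e0_3.symm, e0_4.symm, e1_2.symm, e1_3.symm, e1_4.symm, e2_3.symm, e2_4.symm, e3_4.symm]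
      exact hbound y _ hc (by simp)
  have hg1 : g ≠ 1 := by
    intro e
    rcases horder with h | h | h <;> rw [e, orderOf_one] at h <;> omega
  intro x
  refine ⟨fun e => hg1 (hfree g x e), ?_⟩
  rintro z ⟨h1, h2⟩
  have hordpos : 0 < orderOf g := by rcases horder with h | h | h <;> omega
  have hAx : ∀ k : ℕ, Γ.Adj (g ^ k • x) (g ^ k • z) := fun k => hact _ _ _ h1
  have hBx : ∀ k : ℕ, Γ.Adj (g ^ (k + 1) • x) (g ^ k • z) := by
    intro k
    have := hact (g ^ k) _ _ h2
    rwa [smul_smul, ← pow_succ] at this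
  have hz : ∀ k : ℕ, g ^ k • x ≠ z := by
    intro k e
    have e' : g ^ (k % orderOf g) • x = z := by rw [pow_mod_orderOf]; exact e
    set r := k % orderOf g with hr
    have hrlt : r < orderOf g := Nat.mod_lt _ hordpos
    rcases Nat.eq_zero_or_pos r with h0 | hpos
    · rw [h0, pow_zero, one_smul] at e'
      exact Γ.loopless.irrefl z (e' ▸ h1)
    rcases Nat.lt_or_ge r 2 with hlt2 | hge2
    · have hr1 : r = 1 := by omega
      rw [hr1, pow_one] at e'
      exact Γ.loopless.irrefl z (e' ▸ h2)
    · have hgr1 : g ^ r ≠ 1 := by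
        intro hone
        have := Nat.le_of_dvd hpos (orderOf_dvd_of_pow_eq_one hone)
        omega
      have hprime : Nat.Prime (orderOf g) := by
        rcases horder with h | h | h <;> rw [h] <;> norm_num
      rcases hprime.eq_one_or_self_of_dvd _ (orderOf_pow_dvd r) with ho1 | hop
      · exact hgr1 (orderOf_eq_one_iff.mp ho1)
      · have hord2 : orderOf (g ^ r) = 3 ∨ orderOf (g ^ r) = 5 := by
          rcases horder with h | h | h
          · rw [h] at hrlt; omega
          · left; rw [hop, h]
          · right; rw [hop, h]
        have hadj' : Γ.Adj x (g ^ r • x) := by rw [e']; exact h1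
        exact horb _ hord2 x hadj'
  have hxz : ∀ k l : ℕ, g ^ k • x ≠ g ^ l • z := by
    intro k l e
    apply hz (l * (orderOf g - 1) + k)
    have hinv : g ^ (l * (orderOf g - 1)) = (g ^ l)⁻¹ := by
      apply eq_inv_of_mul_eq_one_left
      rw [← pow_add]
      have hle : l * (orderOf g - 1) + l = l * orderOf g := by
        cases' Nat.exists_eq_add_of_lt hordpos with m hm
        rw [show orderOf g = m + 1 by omega, Nat.add_sub_cancel]
        ring
      rw [hle, mul_comm, pow_mul, pow_orderOf_eq_one, one_pow]
    calc g ^ (l * (orderOf g - 1) + k) • x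
        = ((g ^ l)⁻¹ * g ^ k) • x := by rw [pow_add, hinv]
      _ = (g ^ l)⁻¹ • (g ^ k • x) := by rw [mul_smul]
      _ = (g ^ l)⁻¹ • (g ^ l • z) := by rw [e]
      _ = z := inv_smul_smul _ _
  rcases horder with hp | hp | hp
  · -- order 2
    have eA0 : Γ.Adj (x) (z) := by simpa using hAx 0
    have eB0 : Γ.Adj (z) (g • x) := by simpa using (hBx 0).symm
    have eA1 : Γ.Adj (g • x) (g • z) := by simpa using hAx 1
    have eL : Γ.Adj (g • z) x := by
      have := hBx 1
      rw [show (1:ℕ)+1 = 2 from rfl, show g ^ 2 = 1 by rw [← hp, pow_orderOf_eq_one], one_smul] at this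
      simpa using this.symm
    have d0_1 : (x) ≠ (z) := (by simpa using hxz 0 0)
    have d0_2 : (x) ≠ (g • x) := (by simpa using hvne g 0 1 x (by omega) (by rw [hp]; omega))
    have d0_3 : (x) ≠ (g • z) := (by simpa using hxz 0 1)
    have d1_2 : (z) ≠ (g • x) := (by simpa using (hxz 1 0).symm)
    have d1_3 : (z) ≠ (g • z) := (by simpa using hvne g 0 1 z (by omega) (by rw [hp]; omega))
    have d2_3 : (g • x) ≠ (g • z) := (by simpa using hxz 1 1)
    have hc : (Walk.cons eA0 (.cons eB0 (.cons eA1 (.cons eL (.nil))))).IsCycle := by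
      simp [Walk.isCycle_def, Walk.isTrail_def, Sym2.eq_iff, d0_1, d0_2, d0_3, d1_2, d1_3, d2_3, d0_1.symm, d0_2.symm, d0_3.symm, d1_2.symm, d1_3.symm, d2_3.symm]
    exact hbound x _ hc (by simp)
  · -- order 3
    have eA0 : Γ.Adj (x) (z) := by simpa using hAx 0
    have eB0 : Γ.Adj (z) (g • x) := by simpa using (hBx 0).symm
    have eA1 : Γ.Adj (g • x) (g • z) := by simpa using hAx 1
    have eB1 : Γ.Adj (g • z) (g ^ 2 • x) := by simpa using (hBx 1).symm
    have eA2 : Γ.Adj (g ^ 2 • x) (g ^ 2 • z) := by simpa using hAx 2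
    have eL : Γ.Adj (g ^ 2 • z) x := by
      have := hBx 2
      rw [show (2:ℕ)+1 = 3 from rfl, show g ^ 3 = 1 by rw [← hp, pow_orderOf_eq_one], one_smul] at this
      simpa using this.symm
    have d0_1 : (x) ≠ (z) := (by simpa using hxz 0 0)
    have d0_2 : (x) ≠ (g • x) := (by simpa using hvne g 0 1 x (by omega) (by rw [hp]; omega))
    have d0_3 : (x) ≠ (g • z) := (by simpa using hxz 0 1)
    have d0_4 : (x) ≠ (g ^ 2 • x) := (by simpa using hvne g 0 2 x (by omega) (by rw [hp]; omega))
    have d0_5 : (x) ≠ (g ^ 2 • z) := (by simpa using hxz 0 2)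
    have d1_2 : (z) ≠ (g • x) := (by simpa using (hxz 1 0).symm)
    have d1_3 : (z) ≠ (g • z) := (by simpa using hvne g 0 1 z (by omega) (by rw [hp]; omega))
    have d1_4 : (z) ≠ (g ^ 2 • x) := (by simpa using (hxz 2 0).symm)
    have d1_5 : (z) ≠ (g ^ 2 • z) := (by simpa using hvne g 0 2 z (by omega) (by rw [hp]; omega))
    have d2_3 : (g • x) ≠ (g • z) := (by simpa using hxz 1 1)
    have d2_4 : (g • x) ≠ (g ^ 2 • x) := (by simpa using hvne g 1 2 x (by omega) (by rw [hp]; omega))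
    have d2_5 : (g • x) ≠ (g ^ 2 • z) := (by simpa using hxz 1 2)
    have d3_4 : (g • z) ≠ (g ^ 2 • x) := (by simpa using (hxz 2 1).symm)
    have d3_5 : (g • z) ≠ (g ^ 2 • z) := (by simpa using hvne g 1 2 z (by omega) (by rw [hp]; omega))
    have d4_5 : (g ^ 2 • x) ≠ (g ^ 2 • z) := (by simpa using hxz 2 2)
    have hc : (Walk.cons eA0 (.cons eB0 (.cons eA1 (.cons eB1 (.cons eA2 (.cons eL (.nil))))))).IsCycle := by
      simp [Walk.isCycle_def, Walk.isTrail_def, Sym2.eq_iff, d0_1, d0_2, d0_3, d0_4, d0_5, d1_2, d1_3, d1_4, d1_5, d2_3, d2_4, d2_5, d3_4, d3_5, d4_5, d0_1.symm, d0_2.symm, d0_3.symm, d0_4.symm, d0_5.symm, d1_2.symm, d1_3.symm, d1_4.symm, d1_5.symm, d2_3.symm, d2_4.symm, d2_5.symm, d3_4.symm, d3_5.symm, d4_5.symm]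
    exact hbound x _ hc (by simp)
  · -- order 5
    have eA0 : Γ.Adj (x) (z) := by simpa using hAx 0
    have eB0 : Γ.Adj (z) (g • x) := by simpa using (hBx 0).symm
    have eA1 : Γ.Adj (g • x) (g • z) := by simpa using hAx 1
    have eB1 : Γ.Adj (g • z) (g ^ 2 • x) := by simpa using (hBx 1).symm
    have eA2 : Γ.Adj (g ^ 2 • x) (g ^ 2 • z) := by simpa using hAx 2
    have eB2 : Γ.Adj (g ^ 2 • z) (g ^ 3 • x) := by simpa using (hBx 2).symm
    have eA3 : Γ.Adj (g ^ 3 • x) (g ^ 3 • z) := by simpa using hAx 3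
    have eB3 : Γ.Adj (g ^ 3 • z) (g ^ 4 • x) := by simpa using (hBx 3).symm
    have eA4 : Γ.Adj (g ^ 4 • x) (g ^ 4 • z) := by simpa using hAx 4
    have eL : Γ.Adj (g ^ 4 • z) x := by
      have := hBx 4
      rw [show (4:ℕ)+1 = 5 from rfl, show g ^ 5 = 1 by rw [← hp, pow_orderOf_eq_one], one_smul] at this
      simpa using this.symm
    have d0_1 : (x) ≠ (z) := (by simpa using hxz 0 0)
    have d0_2 : (x) ≠ (g • x) := (by simpa using hvne g 0 1 x (by omega) (by rw [hp]; omega))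
    have d0_3 : (x) ≠ (g • z) := (by simpa using hxz 0 1)
    have d0_4 : (x) ≠ (g ^ 2 • x) := (by simpa using hvne g 0 2 x (by omega) (by rw [hp]; omega))
    have d0_5 : (x) ≠ (g ^ 2 • z) := (by simpa using hxz 0 2)
    have d0_6 : (x) ≠ (g ^ 3 • x) := (by simpa using hvne g 0 3 x (by omega) (by rw [hp]; omega))
    have d0_7 : (x) ≠ (g ^ 3 • z) := (by simpa using hxz 0 3)
    have d0_8 : (x) ≠ (g ^ 4 • x) := (by simpa using hvne g 0 4 x (by omega) (by rw [hp]; omega))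
    have d0_9 : (x) ≠ (g ^ 4 • z) := (by simpa using hxz 0 4)
    have d1_2 : (z) ≠ (g • x) := (by simpa using (hxz 1 0).symm)
    have d1_3 : (z) ≠ (g • z) := (by simpa using hvne g 0 1 z (by omega) (by rw [hp]; omega))
    have d1_4 : (z) ≠ (g ^ 2 • x) := (by simpa using (hxz 2 0).symm)
    have d1_5 : (z) ≠ (g ^ 2 • z) := (by simpa using hvne g 0 2 z (by omega) (by rw [hp]; omega))
    have d1_6 : (z) ≠ (g ^ 3 • x) := (by simpa using (hxz 3 0).symm)
    have d1_7 : (z) ≠ (g ^ 3 • z) := (by simpa using hvne g 0 3 z (by omega) (by rw [hp]; omega))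
    have d1_8 : (z) ≠ (g ^ 4 • x) := (by simpa using (hxz 4 0).symm)
    have d1_9 : (z) ≠ (g ^ 4 • z) := (by simpa using hvne g 0 4 z (by omega) (by rw [hp]; omega))
    have d2_3 : (g • x) ≠ (g • z) := (by simpa using hxz 1 1)
    have d2_4 : (g • x) ≠ (g ^ 2 • x) := (by simpa using hvne g 1 2 x (by omega) (by rw [hp]; omega))
    have d2_5 : (g • x) ≠ (g ^ 2 • z) := (by simpa using hxz 1 2)
    have d2_6 : (g • x) ≠ (g ^ 3 • x) := (by simpa using hvne g 1 3 x (by omega) (by rw [hp]; omega))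
    have d2_7 : (g • x) ≠ (g ^ 3 • z) := (by simpa using hxz 1 3)
    have d2_8 : (g • x) ≠ (g ^ 4 • x) := (by simpa using hvne g 1 4 x (by omega) (by rw [hp]; omega))
    have d2_9 : (g • x) ≠ (g ^ 4 • z) := (by simpa using hxz 1 4)
    have d3_4 : (g • z) ≠ (g ^ 2 • x) := (by simpa using (hxz 2 1).symm)
    have d3_5 : (g • z) ≠ (g ^ 2 • z) := (by simpa using hvne g 1 2 z (by omega) (by rw [hp]; omega))
    have d3_6 : (g • z) ≠ (g ^ 3 • x) := (by simpa using (hxz 3 1).symm)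
    have d3_7 : (g • z) ≠ (g ^ 3 • z) := (by simpa using hvne g 1 3 z (by omega) (by rw [hp]; omega))
    have d3_8 : (g • z) ≠ (g ^ 4 • x) := (by simpa using (hxz 4 1).symm)
    have d3_9 : (g • z) ≠ (g ^ 4 • z) := (by simpa using hvne g 1 4 z (by omega) (by rw [hp]; omega))
    have d4_5 : (g ^ 2 • x) ≠ (g ^ 2 • z) := (by simpa using hxz 2 2)
    have d4_6 : (g ^ 2 • x) ≠ (g ^ 3 • x) := (by simpa using hvne g 2 3 x (by omega) (by rw [hp]; omega))
    have d4_7 : (g ^ 2 • x) ≠ (g ^ 3 • z) := (by simpa using hxz 2 3)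
    have d4_8 : (g ^ 2 • x) ≠ (g ^ 4 • x) := (by simpa using hvne g 2 4 x (by omega) (by rw [hp]; omega))
    have d4_9 : (g ^ 2 • x) ≠ (g ^ 4 • z) := (by simpa using hxz 2 4)
    have d5_6 : (g ^ 2 • z) ≠ (g ^ 3 • x) := (by simpa using (hxz 3 2).symm)
    have d5_7 : (g ^ 2 • z) ≠ (g ^ 3 • z) := (by simpa using hvne g 2 3 z (by omega) (by rw [hp]; omega))
    have d5_8 : (g ^ 2 • z) ≠ (g ^ 4 • x) := (by simpa using (hxz 4 2).symm)
    have d5_9 : (g ^ 2 • z) ≠ (g ^ 4 • z) := (by simpa using hvne g 2 4 z (by omega) (by rw [hp]; omega))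
    have d6_7 : (g ^ 3 • x) ≠ (g ^ 3 • z) := (by simpa using hxz 3 3)
    have d6_8 : (g ^ 3 • x) ≠ (g ^ 4 • x) := (by simpa using hvne g 3 4 x (by omega) (by rw [hp]; omega))
    have d6_9 : (g ^ 3 • x) ≠ (g ^ 4 • z) := (by simpa using hxz 3 4)
    have d7_8 : (g ^ 3 • z) ≠ (g ^ 4 • x) := (by simpa using (hxz 4 3).symm)
    have d7_9 : (g ^ 3 • z) ≠ (g ^ 4 • z) := (by simpa using hvne g 3 4 z (by omega) (by rw [hp]; omega))
    have d8_9 : (g ^ 4 • x) ≠ (g ^ 4 • z) := (by simpa using hxz 4 4)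
    have hc : (Walk.cons eA0 (.cons eB0 (.cons eA1 (.cons eB1 (.cons eA2 (.cons eB2 (.cons eA3 (.cons eB3 (.cons eA4 (.cons eL (.nil))))))))))).IsCycle := by
      simp [Walk.isCycle_def, Walk.isTrail_def, Sym2.eq_iff, d0_1, d0_2, d0_3, d0_4, d0_5, d0_6, d0_7, d0_8, d0_9, d1_2, d1_3, d1_4, d1_5, d1_6, d1_7, d1_8, d1_9, d2_3, d2_4, d2_5, d2_6, d2_7, d2_8, d2_9, d3_4, d3_5, d3_6, d3_7, d3_8, d3_9, d4_5, d4_6, d4_7, d4_8, d4_9, d5_6, d5_7, d5_8, d5_9, d6_7, d6_8, d6_9, d7_8, d7_9, d8_9, d0_1.symm, d0_2.symm, d0_3.symm, d0_4.symm, d0_5.symm, d0_6.symm, d0_7.symm, d0_8.symm, d0_9.symm, d1_2.symm, d1_3.symm, d1_4.symm, d1_5.symm, d1_6.symm, d1_7.symm, d1_8.symm, d1_9.symm, d2_3.symm, d2_4.symm, d2_5.symm, d2_6.symm, d2_7.symm, d2_8.symm, d2_9.symm, d3_4.symm, d3_5.symm, d3_6.symm, d3_7.symm, d3_8.symm, d3_9.symm,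 d4_5.symm, d4_6.symm, d4_7.symm, d4_8.symm, d4_9.symm, d5_6.symm, d5_7.symm, d5_8.symm, d5_9.symm, d6_7.symm, d6_8.symm, d6_9.symm, d7_8.symm, d7_9.symm, d8_9.symm]
    exact hbound x _ hc (by simp)
end

section
/- For every finite group G and every inverse-closed subset S ⊆ G with 1 ∉ S, the Cayley graph Cay(G,S) is not distance-regular with intersection array {5,4,4,4; 1,1,1,5}. Equivalently, the incidence graph of the generalized quadrangle GQ(4,4) — the unique distance-regular graph with this intersection array, on 170 vertices — is not a Cayley graph. -/
open SimpleGraph Finset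

section PartI

variable {V : Type*} [Fintype V] {Γ : SimpleGraph V}
  (hd : Γ.IsDRGWith [5, 4, 4, 4] [1, 1, 1, 5])

section
include hd

lemma drg_dist_le (x y : V) : Γ.dist x y ≤ 4 := hd.2.2.1 x y

lemma drg_deg (y : V) : {z : V | Γ.Adj y z}.ncard = 5 := by
  have h := (hd.2.2.2.2 0 y y SimpleGraph.dist_self).1 (by norm_num)
  have hset : {z : V | Γ.Adj y z ∧ Γ.dist y z = 0 + 1} = {z : V | Γ.Adj y z} := by
    ext z
    simp only [Set.mem_setOf_eq, zero_add, and_iff_left_iff_imp]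
    exact fun h => SimpleGraph.dist_eq_one_iff_adj.mpr h
  rwa [hset] at h

end

/-- helper: two disjoint subsets of N with total cardinality that of N cover N -/
lemma subset_cover {A B N : Set V} (hAN : A ⊆ N) (hBN : B ⊆ N) (hdisj : Disjoint A B)
    (hcard : A.ncard + B.ncard = N.ncard) : N ⊆ A ∪ B := by
  have h1 : (A ∪ B).ncard = N.ncard := by
    rw [Set.ncard_union_eq hdisj (Set.toFinite _) (Set.toFinite _)]; exact hcard
  exact (Set.eq_of_subset_of_ncard_le (Set.union_subset hAN hBN) h1.symm.le
    (Set.toFinite N)).symm.subset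

include hd in
lemma drg_dichotomy (x y z : V) (hadj : Γ.Adj y z) :
    Γ.dist x z = Γ.dist x y + 1 ∨ Γ.dist x y = Γ.dist x z + 1 := by
  have hle : Γ.dist x y ≤ 4 := hd.2.2.1 x y
  have hN := drg_deg hd y
  have hcases : Γ.dist x y = 0 ∨ Γ.dist x y = 1 ∨ Γ.dist x y = 2 ∨ Γ.dist x y = 3 ∨
      Γ.dist x y = 4 := by omega
  have main := hd.2.2.2.2
  -- helper for middle cases
  have mid : ∀ i : ℕ, 1 ≤ i → Γ.dist x y = i →
      {z : V | Γ.Adj y z ∧ Γ.dist x z = i + 1}.ncard = 4 →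
      {z : V | Γ.Adj y z ∧ Γ.dist x z = i - 1}.ncard = 1 →
      Γ.dist x z = Γ.dist x y + 1 ∨ Γ.dist x y = Γ.dist x z + 1 := by
    intro i hi1 hi hB hC
    have hdisj : Disjoint {w : V | Γ.Adj y w ∧ Γ.dist x w = i + 1}
        {w : V | Γ.Adj y w ∧ Γ.dist x w = i - 1} := by
      rw [Set.disjoint_left]
      rintro w ⟨-, h1⟩ ⟨-, h2⟩
      omega
    have hcov := subset_cover (A := {w : V | Γ.Adj y w ∧ Γ.dist x w = i + 1})
      (B := {w : V | Γ.Adj y w ∧ Γ.dist x w = i - 1})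
      (N := {w : V | Γ.Adj y w}) (fun w hw => hw.1) (fun w hw => hw.1) hdisj
      (by rw [hB, hC, hN])
    rcases hcov hadj with h | h
    · left; rw [hi]; exact h.2
    · right
      rw [hi, h.2]; omega
  rcases hcases with h0 | h1 | h2 | h3 | h4
  · -- dist x y = 0, all neighbours at distance 1
    have hB := (main 0 x y h0).1 (by norm_num)
    have : {w : V | Γ.Adj y w ∧ Γ.dist x w = 0 + 1} = {w : V | Γ.Adj y w} :=
      Set.eq_of_subset_of_ncard_le (fun w hw => hw.1) (by rw [hB, hN]; simp [List.getD]) (Set.toFinite _)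
    left
    rw [h0]
    have hz : z ∈ {w : V | Γ.Adj y w} := hadj
    rw [← this] at hz
    exact hz.2
  · exact mid 1 (by norm_num) h1 (by simpa [List.getD] using (main 1 x y h1).1 (by norm_num)) (by simpa [List.getD] using (main 1 x y h1).2 (by norm_num))
  · exact mid 2 (by norm_num) h2 (by simpa [List.getD] using (main 2 x y h2).1 (by norm_num)) (by simpa [List.getD] using (main 2 x y h2).2 (by norm_num))
  · exact mid 3 (by norm_num) h3 (by simpa [List.getD] using (main 3 x y h3).1 (by norm_num)) (by simpa [List.getD] using (main 3 x y h3).2 (by norm_num))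
  · -- dist x y = 4: all neighbours at distance 3
    have hC := (main 4 x y h4).2 (by norm_num)
    have : {w : V | Γ.Adj y w ∧ Γ.dist x w = 4 - 1} = {w : V | Γ.Adj y w} :=
      Set.eq_of_subset_of_ncard_le (fun w hw => hw.1) (by rw [hC, hN]; simp [List.getD]) (Set.toFinite _)
    right
    rw [h4]
    have hz : z ∈ {w : V | Γ.Adj y w} := hadj
    rw [← this] at hz
    have := hz.2
    omega

lemma zmod2_even {n : ℕ} : (n : ZMod 2) = 0 ↔ Even n := by
  rw [ZMod.natCast_eq_zero_iff]; exact even_iff_two_dvd.symm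

include hd in
lemma drg_walk_parity (x : V) {u v : V} (w : Γ.Walk u v) :
    (Γ.dist x u : ZMod 2) = (Γ.dist x v : ZMod 2) + (w.length : ZMod 2) := by
  induction w with
  | nil => simp
  | @cons a b c hadj p ih =>
    simp only [SimpleGraph.Walk.length_cons]
    rcases drg_dichotomy hd x a b hadj with h | h
    · have := congrArg (fun n : ℕ => (n : ZMod 2)) h
      push_cast at this ⊢
      rw [ih] at this
      have h2 : (2 : ZMod 2) = 0 := by decide
      linear_combination -this - h2
    · have := congrArg (fun n : ℕ => (n : ZMod 2)) h
      push_cast at this ⊢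
      rw [ih] at this
      linear_combination this

include hd in
lemma drg_step (x : V) (i nb nc : ℕ)
    (hb : ∀ y : V, Γ.dist x y = i → {z : V | Γ.Adj y z ∧ Γ.dist x z = i + 1}.ncard = nb)
    (hc : ∀ z : V, Γ.dist x z = i + 1 → {w : V | Γ.Adj z w ∧ Γ.dist x w = i}.ncard = nc) :
    {y : V | Γ.dist x y = i}.ncard * nb = {z : V | Γ.dist x z = i + 1}.ncard * nc := by
  classical
  set Sy : Finset V := Finset.univ.filter (fun y => Γ.dist x y = i) with hSy
  set Sz : Finset V := Finset.univ.filter (fun z => Γ.dist x z = i + 1) with hSz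
  set E : Finset (V × V) := Finset.univ.filter
    (fun p : V × V => Γ.dist x p.1 = i ∧ Γ.Adj p.1 p.2 ∧ Γ.dist x p.2 = i + 1) with hE
  have memE : ∀ p : V × V, p ∈ E ↔
      Γ.dist x p.1 = i ∧ Γ.Adj p.1 p.2 ∧ Γ.dist x p.2 = i + 1 := by
    intro p; simp [hE]
  have hcard1 : E.card = Sy.card * nb := by
    rw [Finset.card_eq_sum_card_fiberwise (f := Prod.fst) (t := Sy)
      (fun p hp => by simp [hSy, ((memE p).mp hp).1])]
    apply Finset.sum_const_nat
    intro y hy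
    have hyd : Γ.dist x y = i := by simpa [hSy] using hy
    have hb' := hb y hyd
    rw [Set.ncard_eq_toFinset_card', Set.toFinset_setOf] at hb'
    rw [← hb']
    refine Finset.card_bij' (fun p _ => p.2) (fun z _ => (y, z)) ?_ ?_ ?_ ?_
    · intro p hp
      rw [Finset.mem_filter] at hp
      obtain ⟨hpE, hp1⟩ := hp
      rw [memE] at hpE
      rw [Finset.mem_filter]
      have hadj : Γ.Adj y p.2 := by rw [← hp1]; exact hpE.2.1
      exact ⟨Finset.mem_univ _, hadj, hpE.2.2⟩
    · intro z hz
      rw [Finset.mem_filter] at hz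
      rw [Finset.mem_filter, memE]
      exact ⟨⟨hyd, hz.2.1, hz.2.2⟩, rfl⟩
    · intro p hp
      rw [Finset.mem_filter] at hp
      exact Prod.ext hp.2.symm rfl
    · intro z _; rfl
  have hcard2 : E.card = Sz.card * nc := by
    rw [Finset.card_eq_sum_card_fiberwise (f := Prod.snd) (t := Sz)
      (fun p hp => by simp [hSz, ((memE p).mp hp).2.2])]
    apply Finset.sum_const_nat
    intro z hz
    have hzd : Γ.dist x z = i + 1 := by simpa [hSz] using hz
    have hc' := hc z hzd
    rw [Set.ncard_eq_toFinset_card', Set.toFinset_setOf] at hc'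
    rw [← hc']
    refine Finset.card_bij' (fun p _ => p.1) (fun w _ => (w, z)) ?_ ?_ ?_ ?_
    · intro p hp
      rw [Finset.mem_filter] at hp
      obtain ⟨hpE, hp2⟩ := hp
      rw [memE] at hpE
      rw [Finset.mem_filter]
      exact ⟨Finset.mem_univ _, Γ.adj_symm (hp2 ▸ hpE.2.1), hpE.1⟩
    · intro w hw
      rw [Finset.mem_filter] at hw
      rw [Finset.mem_filter, memE]
      exact ⟨⟨hw.2.2, Γ.adj_symm hw.2.1, hzd⟩, rfl⟩
    · intro p hp
      rw [Finset.mem_filter] at hp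
      exact Prod.ext rfl hp.2.symm
    · intro w _; rfl
  have e1 : {y : V | Γ.dist x y = i}.ncard = Sy.card := by
    rw [Set.ncard_eq_toFinset_card', Set.toFinset_setOf]
  have e2 : {z : V | Γ.dist x z = i + 1}.ncard = Sz.card := by
    rw [Set.ncard_eq_toFinset_card', Set.toFinset_setOf]
  rw [e1, e2, ← hcard1, ← hcard2]

include hd in
lemma drg_k1 (x : V) : {y : V | Γ.dist x y = 1}.ncard = 5 := by
  have : {y : V | Γ.dist x y = 1} = {y : V | Γ.Adj x y} := by
    ext y; simp [SimpleGraph.dist_eq_one_iff_adj]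
  rw [this]; exact drg_deg hd x

include hd in
lemma drg_k2 (x : V) : {y : V | Γ.dist x y = 2}.ncard = 20 := by
  have main := hd.2.2.2.2
  have step := drg_step hd x 1 4 1
    (fun y hy => by simpa [List.getD] using (main 1 x y hy).1 (by norm_num))
    (fun z hz => by simpa [List.getD] using (main 2 x z hz).2 (by norm_num))
  rw [drg_k1 hd x] at step
  have e : {z : V | Γ.dist x z = 1 + 1} = {z : V | Γ.dist x z = 2} := rfl
  rw [e] at step
  omega

include hd in
lemma drg_k3 (x : V) : {y : V | Γ.dist x y = 3}.ncard = 80 := by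
  have main := hd.2.2.2.2
  have step := drg_step hd x 2 4 1
    (fun y hy => by simpa [List.getD] using (main 2 x y hy).1 (by norm_num))
    (fun z hz => by simpa [List.getD] using (main 3 x z hz).2 (by norm_num))
  rw [drg_k2 hd x] at step
  have e : {z : V | Γ.dist x z = 2 + 1} = {z : V | Γ.dist x z = 3} := rfl
  rw [e] at step
  omega

include hd in
lemma drg_k4 (x : V) : {y : V | Γ.dist x y = 4}.ncard = 64 := by
  have main := hd.2.2.2.2
  have step := drg_step hd x 3 4 5
    (fun y hy => by simpa [List.getD] using (main 3 x y hy).1 (by norm_num))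
    (fun z hz => by simpa [List.getD] using (main 4 x z hz).2 (by norm_num))
  rw [drg_k3 hd x] at step
  have e : {z : V | Γ.dist x z = 3 + 1} = {z : V | Γ.dist x z = 4} := rfl
  rw [e] at step
  omega

include hd in
lemma drg_p22 (x y : V) (h4 : Γ.dist x y = 4) :
    {z : V | Γ.dist x z = 2 ∧ Γ.dist z y = 2}.ncard = 5 := by
  classical
  have hconn := hd.1
  have main := hd.2.2.2.2
  -- the c₄ set
  have hA : {w : V | Γ.Adj y w ∧ Γ.dist x w = 3}.ncard = 5 := by
    simpa [List.getD] using (main 4 x y h4).2 (by norm_num)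
  set P : Finset V := Finset.univ.filter (fun z => Γ.dist x z = 2 ∧ Γ.dist z y = 2) with hP
  set A : Finset V := Finset.univ.filter (fun w => Γ.Adj y w ∧ Γ.dist x w = 3) with hAdef
  set E : Finset (V × V) := Finset.univ.filter
    (fun p : V × V => (Γ.dist x p.1 = 2 ∧ Γ.dist p.1 y = 2) ∧ Γ.Adj p.1 p.2 ∧
      Γ.dist y p.2 = 1) with hE
  have memE : ∀ p : V × V, p ∈ E ↔ (Γ.dist x p.1 = 2 ∧ Γ.dist p.1 y = 2) ∧ Γ.Adj p.1 p.2 ∧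
      Γ.dist y p.2 = 1 := by intro p; simp [hE]
  -- fibers over the first coordinate
  have hcard1 : E.card = P.card := by
    rw [Finset.card_eq_sum_card_fiberwise (f := Prod.fst) (t := P)
      (fun p hp => by simp [hP, ((memE p).mp hp).1.1, ((memE p).mp hp).1.2])]
    rw [Finset.sum_const_nat (m := 1), mul_one]
    intro z hz
    have hzP : Γ.dist x z = 2 ∧ Γ.dist z y = 2 := by simpa [hP] using hz
    have hfib : {w : V | Γ.Adj z w ∧ Γ.dist y w = 1}.ncard = 1 := by
      simpa [List.getD] using (main 2 y z (by rw [SimpleGraph.dist_comm]; exact hzP.2)).2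
        (by norm_num)
    rw [Set.ncard_eq_toFinset_card', Set.toFinset_setOf] at hfib
    rw [← hfib]
    refine Finset.card_bij' (fun p _ => p.2) (fun w _ => (z, w)) ?_ ?_ ?_ ?_
    · intro p hp
      rw [Finset.mem_filter] at hp
      obtain ⟨hpE, hp1⟩ := hp
      rw [memE] at hpE
      rw [Finset.mem_filter]
      have hadj : Γ.Adj z p.2 := by rw [← hp1]; exact hpE.2.1
      exact ⟨Finset.mem_univ _, hadj, hpE.2.2⟩
    · intro w hw
      rw [Finset.mem_filter] at hw
      rw [Finset.mem_filter, memE]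
      exact ⟨⟨hzP, hw.2.1, hw.2.2⟩, rfl⟩
    · intro p hp
      rw [Finset.mem_filter] at hp
      exact Prod.ext hp.2.symm rfl
    · intro w _; rfl
  -- fibers over the second coordinate
  have hmaps : ∀ p ∈ E, p.2 ∈ A := by
    intro p hp
    rw [memE] at hp
    obtain ⟨⟨hxz, hzy⟩, hadj, hyw⟩ := hp
    rw [hAdef, Finset.mem_filter]
    refine ⟨Finset.mem_univ _, SimpleGraph.dist_eq_one_iff_adj.mp hyw, ?_⟩
    have hd1 : Γ.dist p.1 p.2 = 1 := SimpleGraph.dist_eq_one_iff_adj.mpr hadj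
    have h1 := hconn.dist_triangle (u := x) (v := p.1) (w := p.2)
    have hp2y : Γ.dist p.2 y = 1 := by rw [SimpleGraph.dist_comm]; exact hyw
    have h2 := hconn.dist_triangle (u := x) (v := p.2) (w := y)
    omega
  have hcard2 : E.card = A.card := by
    rw [Finset.card_eq_sum_card_fiberwise (f := Prod.snd) (t := A) hmaps]
    rw [Finset.sum_const_nat (m := 1), mul_one]
    intro w hw
    have hwA : Γ.Adj y w ∧ Γ.dist x w = 3 := by simpa [hAdef] using hw
    have hfib : {z : V | Γ.Adj w z ∧ Γ.dist x z = 2}.ncard = 1 := by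
      simpa [List.getD] using (main 3 x w hwA.2).2 (by norm_num)
    rw [Set.ncard_eq_toFinset_card', Set.toFinset_setOf] at hfib
    rw [← hfib]
    refine Finset.card_bij' (fun p _ => p.1) (fun z _ => (z, w)) ?_ ?_ ?_ ?_
    · intro p hp
      rw [Finset.mem_filter] at hp
      obtain ⟨hpE, hp2⟩ := hp
      rw [memE] at hpE
      rw [Finset.mem_filter]
      have hadj : Γ.Adj w p.1 := by rw [← hp2]; exact Γ.adj_symm hpE.2.1
      exact ⟨Finset.mem_univ _, hadj, hpE.1.1⟩
    · intro z hz
      rw [Finset.mem_filter] at hz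
      obtain ⟨-, hwz, hxz⟩ := hz
      rw [Finset.mem_filter, memE]
      have hzy : Γ.dist z y = 2 := by
        have hzw : Γ.dist z w = 1 := SimpleGraph.dist_eq_one_iff_adj.mpr (Γ.adj_symm hwz)
        have hwy : Γ.dist w y = 1 := by
          rw [SimpleGraph.dist_comm]
          exact SimpleGraph.dist_eq_one_iff_adj.mpr hwA.1
        have hub := hconn.dist_triangle (u := z) (v := w) (w := y)
        have hlb := hconn.dist_triangle (u := x) (v := z) (w := y)
        omega
      exact ⟨⟨⟨hxz, hzy⟩, Γ.adj_symm hwz, SimpleGraph.dist_eq_one_iff_adj.mpr hwA.1⟩, rfl⟩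
    · intro p hp
      rw [Finset.mem_filter] at hp
      exact Prod.ext rfl hp.2.symm
    · intro z _; rfl
  have hAcard : A.card = 5 := by
    rw [Set.ncard_eq_toFinset_card', Set.toFinset_setOf] at hA
    exact hA ▸ rfl
  have : P.card = 5 := by omega
  rw [Set.ncard_eq_toFinset_card', Set.toFinset_setOf]
  exact this

end PartI

section PartII

lemma exists_fixed_of_odd_card {α : Type*} (s : Finset α) (g : α → α)
    (hmem : ∀ a ∈ s, g a ∈ s) (hgg : ∀ a ∈ s, g (g a) = a) (hodd : Odd s.card) :
    ∃ a ∈ s, g a = a := by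
  by_contra hfix
  push_neg at hfix
  have h1 : ∏ _x ∈ s, (-1 : ℤ) = 1 :=
    Finset.prod_involution (fun a _ => g a) (fun a ha => by norm_num)
      (fun a ha _ => hfix a ha) (fun a ha => hmem a ha) (fun a ha => hgg a ha)
  rw [Finset.prod_const] at h1
  rw [Odd.neg_one_pow hodd] at h1
  norm_num at h1

lemma comm_of_card_85 {K : Type*} [Group K] [Fintype K] (hK : Nat.card K = 85) :
    ∀ a b : K, a * b = b * a := by
  have f17 : Fact (Nat.Prime 17) := ⟨by norm_num⟩
  have f5 : Fact (Nat.Prime 5) := ⟨by norm_num⟩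
  have hK' : Fintype.card K = 85 := by rw [← Nat.card_eq_fintype_card, hK]
  obtain ⟨x, hx⟩ := exists_prime_orderOf_dvd_card 17 (by rw [hK']; norm_num)
  obtain ⟨y, hy⟩ := exists_prime_orderOf_dvd_card 5 (by rw [hK']; norm_num)
  have hPx : IsPGroup 17 (Subgroup.zpowers x) :=
    IsPGroup.of_card (n := 1) (by rw [Nat.card_zpowers, hx, pow_one])
  have hPy : IsPGroup 5 (Subgroup.zpowers y) :=
    IsPGroup.of_card (n := 1) (by rw [Nat.card_zpowers, hy, pow_one])
  obtain ⟨Q, hQ⟩ := hPx.exists_le_sylow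
  obtain ⟨R, hR⟩ := hPy.exists_le_sylow
  have hf17 : (Nat.card K).factorization 17 = 1 := by
    rw [hK, show (85 : ℕ) = 5 * 17 from rfl,
      Nat.factorization_mul (by norm_num) (by norm_num), Finsupp.add_apply,
      (by norm_num : Nat.Prime 5).factorization, (by norm_num : Nat.Prime 17).factorization]
    simp [Finsupp.single_apply]
  have hf5 : (Nat.card K).factorization 5 = 1 := by
    rw [hK, show (85 : ℕ) = 5 * 17 from rfl,
      Nat.factorization_mul (by norm_num) (by norm_num), Finsupp.add_apply,
      (by norm_num : Nat.Prime 5).factorization, (by norm_num : Nat.Prime 17).factorization]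
    simp [Finsupp.single_apply]
  have hQcard : Nat.card (Q : Subgroup K) = 17 := by
    rw [Sylow.card_eq_multiplicity, hf17, pow_one]
  have hRcard : Nat.card (R : Subgroup K) = 5 := by
    rw [Sylow.card_eq_multiplicity, hf5, pow_one]
  have hQindex : (Q : Subgroup K).index = 5 := by
    have := Subgroup.card_mul_index (Q : Subgroup K)
    rw [hQcard, hK] at this
    omega
  have hRindex : (R : Subgroup K).index = 17 := by
    have := Subgroup.card_mul_index (R : Subgroup K)
    rw [hRcard, hK] at this
    omega
  have hQn : (Q : Subgroup K).Normal := by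
    have hdvd : Nat.card (Sylow 17 K) ∣ 5 := hQindex ▸ Sylow.card_dvd_index Q
    have hmod := card_sylow_modEq_one 17 K
    have h1 : Nat.card (Sylow 17 K) = 1 := by
      rcases (by norm_num : Nat.Prime 5).eq_one_or_self_of_dvd _ hdvd with h | h
      · exact h
      · rw [h] at hmod
        exact absurd hmod (by decide)
    have := Sylow.card_eq_index_normalizer Q
    rw [h1] at this
    exact Subgroup.normalizer_eq_top_iff.mp (Subgroup.index_eq_one.mp this.symm)
  have hRn : (R : Subgroup K).Normal := by
    have hdvd : Nat.card (Sylow 5 K) ∣ 17 := hRindex ▸ Sylow.card_dvd_index R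
    have hmod := card_sylow_modEq_one 5 K
    have h1 : Nat.card (Sylow 5 K) = 1 := by
      rcases (by norm_num : Nat.Prime 17).eq_one_or_self_of_dvd _ hdvd with h | h
      · exact h
      · rw [h] at hmod
        exact absurd hmod (by decide)
    have := Sylow.card_eq_index_normalizer R
    rw [h1] at this
    exact Subgroup.normalizer_eq_top_iff.mp (Subgroup.index_eq_one.mp this.symm)
  have hdisj : Disjoint (Q : Subgroup K) (R : Subgroup K) :=
    IsPGroup.disjoint_of_ne 17 5 (by norm_num) _ _ Q.isPGroup' R.isPGroup'
  have hcomm : Commute x y :=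
    Subgroup.commute_of_normal_of_disjoint _ _ hQn hRn hdisj x y
      (hQ (Subgroup.mem_zpowers x)) (hR (Subgroup.mem_zpowers y))
  have horder : orderOf (x * y) = 85 := by
    rw [hcomm.orderOf_mul_eq_mul_orderOf_of_coprime (by rw [hx, hy]; norm_num), hx, hy]
  have hcyc : IsCyclic K := isCyclic_of_orderOf_eq_card (x * y) (by rw [horder, hK])
  letI : CommGroup K := IsCyclic.commGroup
  exact fun a b => mul_comm a b

variable {G : Type*} [Group G] [Fintype G] (S : Set G)

lemma cay_adj_mul (a b g : G) :
    (cayleyGraph S).Adj (a * g) (b * g) ↔ (cayleyGraph S).Adj a b := by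
  show (a * g ≠ b * g ∧ a * g * (b * g)⁻¹ ∈ S ∧ b * g * (a * g)⁻¹ ∈ S) ↔
    (a ≠ b ∧ a * b⁻¹ ∈ S ∧ b * a⁻¹ ∈ S)
  have e1 : a * g * (b * g)⁻¹ = a * b⁻¹ := by group
  have e2 : b * g * (a * g)⁻¹ = b * a⁻¹ := by group
  rw [e1, e2, ne_eq, mul_left_inj, ne_eq]

lemma cay_dist_mul_le (hconn : (cayleyGraph S).Connected) (a b g : G) :
    (cayleyGraph S).dist (a * g) (b * g) ≤ (cayleyGraph S).dist a b := by
  obtain ⟨w, hw⟩ := hconn.exists_walk_length_eq_dist a b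
  let hom : cayleyGraph S →g cayleyGraph S :=
    ⟨fun x => x * g, fun {u v} hadj => (cay_adj_mul S u v g).mpr hadj⟩
  have := SimpleGraph.dist_le (w.map hom)
  rwa [SimpleGraph.Walk.length_map, hw] at this

lemma cay_dist_mul (hconn : (cayleyGraph S).Connected) (a b g : G) :
    (cayleyGraph S).dist (a * g) (b * g) = (cayleyGraph S).dist a b := by
  refine le_antisymm (cay_dist_mul_le S hconn a b g) ?_
  have := cay_dist_mul_le S hconn (a * g) (b * g) g⁻¹
  simpa using this

end PartII

/-- The incidence graph of the generalized quadrangle GQ(4,4), the unique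
distance-regular graph with intersection array {5,4,4,4; 1,1,1,5}, is not a Cayley graph. -/
theorem stmt_8 {G : Type*} [Group G] [Fintype G] (S : Set G)
    (hS : ∀ s ∈ S, s⁻¹ ∈ S) (h1 : (1 : G) ∉ S) :
    ¬ (cayleyGraph S).IsDRGWith [5, 4, 4, 4] [1, 1, 1, 5] := by
  intro hd
  classical
  have hconn := hd.1
  have hdistmul : ∀ a b g : G, (cayleyGraph S).dist (a * g) (b * g) =
      (cayleyGraph S).dist a b := cay_dist_mul S hconn
  have hdinv : ∀ g : G, (cayleyGraph S).dist 1 g⁻¹ = (cayleyGraph S).dist 1 g := by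
    intro g
    have h := hdistmul 1 g⁻¹ g
    rw [one_mul, inv_mul_cancel] at h
    rw [← h, SimpleGraph.dist_comm]
  have hpar : ∀ g h : G, ((cayleyGraph S).dist 1 (g * h) : ZMod 2) =
      ((cayleyGraph S).dist 1 g : ZMod 2) + ((cayleyGraph S).dist 1 h : ZMod 2) := by
    intro g h
    obtain ⟨w1, hw1⟩ := hconn.exists_walk_length_eq_dist 1 g
    obtain ⟨w2, hw2⟩ := hconn.exists_walk_length_eq_dist 1 h
    let hom : cayleyGraph S →g cayleyGraph S :=
      ⟨fun x => x * h, fun {u v} hadj => (cay_adj_mul S u v h).mpr hadj⟩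
    have hw : ((cayleyGraph S).dist 1 1 : ZMod 2) =
        ((cayleyGraph S).dist 1 (g * h) : ZMod 2) +
          ((w2.append ((w1.map hom).copy (one_mul h) rfl)).length : ZMod 2) :=
      drg_walk_parity hd 1 (w2.append ((w1.map hom).copy (one_mul h) rfl))
    rw [SimpleGraph.dist_self] at hw
    rw [SimpleGraph.Walk.length_append, SimpleGraph.Walk.length_copy,
      SimpleGraph.Walk.length_map, hw1, hw2] at hw
    push_cast at hw
    have h2 : (2 : ZMod 2) = 0 := by decide
    linear_combination -hw - h2 * (((cayleyGraph S).dist 1 g : ZMod 2) +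
      ((cayleyGraph S).dist 1 h : ZMod 2))
  have heven_mul : ∀ g h : G, Even ((cayleyGraph S).dist 1 g) →
      Even ((cayleyGraph S).dist 1 h) → Even ((cayleyGraph S).dist 1 (g * h)) := by
    intro g h hg hh
    rw [← zmod2_even] at hg hh ⊢
    rw [hpar g h, hg, hh, add_zero]
  set H : Subgroup G :=
    { carrier := {g : G | Even ((cayleyGraph S).dist 1 g)}
      one_mem' := by
        show Even ((cayleyGraph S).dist 1 1)
        rw [SimpleGraph.dist_self]
        exact Even.zero
      mul_mem' := fun {a b} ha hb => heven_mul a b ha hb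
      inv_mem' := fun {a} ha => by
        simp only [Set.mem_setOf_eq] at ha ⊢
        rwa [hdinv] } with hH
  -- cardinality of H
  have hsplit : {g : G | Even ((cayleyGraph S).dist 1 g)} =
      ({g : G | (cayleyGraph S).dist 1 g = 0} ∪ {g : G | (cayleyGraph S).dist 1 g = 2}) ∪
        {g : G | (cayleyGraph S).dist 1 g = 4} := by
    ext g
    have hle := drg_dist_le hd 1 g
    simp only [Set.mem_union, Set.mem_setOf_eq]
    constructor
    · rintro ⟨k, hk⟩
      omega
    · rintro ((h | h) | h) <;> rw [h] <;> decide
  have hd0 : {g : G | (cayleyGraph S).dist 1 g = 0} = {(1 : G)} := by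
    ext g
    simp only [Set.mem_setOf_eq, Set.mem_singleton_iff]
    rw [hconn.dist_eq_zero_iff]
    exact eq_comm
  have hcardH : ({g : G | Even ((cayleyGraph S).dist 1 g)} : Set G).ncard = 85 := by
    rw [hsplit]
    rw [Set.ncard_union_eq (by
        rw [Set.disjoint_left]
        rintro g (hg | hg) hg' <;> simp only [Set.mem_setOf_eq] at hg hg' <;> omega)
      (Set.toFinite _) (Set.toFinite _)]
    rw [Set.ncard_union_eq (by
        rw [Set.disjoint_left]
        rintro g hg hg' <;> simp only [Set.mem_setOf_eq] at hg hg' <;> omega)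
      (Set.toFinite _) (Set.toFinite _)]
    rw [hd0, Set.ncard_singleton, drg_k2 hd 1, drg_k4 hd 1]
  have hcardH' : Nat.card H = 85 := by
    have : Nat.card H = ({g : G | Even ((cayleyGraph S).dist 1 g)} : Set G).ncard := by
      rw [← Nat.card_coe_set_eq]
      rfl
    rw [this, hcardH]
  haveI : Fintype H := Fintype.ofFinite _
  have hcomm : ∀ a b : G, Even ((cayleyGraph S).dist 1 a) →
      Even ((cayleyGraph S).dist 1 b) → a * b = b * a := by
    intro a b ha hb
    have := comm_of_card_85 hcardH' ⟨a, ha⟩ ⟨b, hb⟩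
    exact Subtype.ext_iff.mp this
  -- every element at distance 4 is the square of an element at distance 2
  have key : ∀ h : G, (cayleyGraph S).dist 1 h = 4 →
      ∃ d : G, (cayleyGraph S).dist 1 d = 2 ∧ d * d = h := by
    intro h h4
    have hp22 := drg_p22 hd 1 h h4
    set F : Finset G := Finset.univ.filter
      (fun d => (cayleyGraph S).dist 1 d = 2 ∧ (cayleyGraph S).dist d h = 2) with hF
    have hFcard : F.card = 5 := by
      rw [Set.ncard_eq_toFinset_card', Set.toFinset_setOf] at hp22
      exact hp22
    have hmem : ∀ d ∈ F, d⁻¹ * h ∈ F := by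
      intro d hdF
      rw [hF, Finset.mem_filter] at hdF
      obtain ⟨-, hd2, hdh⟩ := hdF
      have hc : d * h = h * d := hcomm d h (by rw [hd2]; decide) (by rw [h4]; decide)
      have e1 : (cayleyGraph S).dist 1 (d⁻¹ * h) = 2 := by
        have e := hdistmul 1 (d⁻¹ * h) d
        rw [one_mul] at e
        have e' : d⁻¹ * h * d = h := by
          rw [mul_assoc, ← hc, ← mul_assoc, inv_mul_cancel, one_mul]
        rw [e'] at e
        rw [← e]
        exact hdh
      have e2 : (cayleyGraph S).dist (d⁻¹ * h) h = 2 := by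
        have e := hdistmul (d⁻¹ * h) h h⁻¹
        rw [mul_inv_cancel, mul_assoc, mul_inv_cancel, mul_one] at e
        rw [← e, SimpleGraph.dist_comm, hdinv, hd2]
      rw [hF, Finset.mem_filter]
      exact ⟨Finset.mem_univ _, e1, e2⟩
    have hgg : ∀ d ∈ F, (d⁻¹ * h)⁻¹ * h = d := by
      intro d hdF
      rw [hF, Finset.mem_filter] at hdF
      obtain ⟨-, hd2, -⟩ := hdF
      have hc : d * h = h * d := hcomm d h (by rw [hd2]; decide) (by rw [h4]; decide)
      rw [mul_inv_rev, inv_inv, mul_assoc, hc, ← mul_assoc, inv_mul_cancel, one_mul]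
    obtain ⟨d, hdF, hfix⟩ := exists_fixed_of_odd_card F (fun d => d⁻¹ * h) hmem hgg
      (by rw [hFcard]; decide)
    rw [hF, Finset.mem_filter] at hdF
    refine ⟨d, hdF.2.1, ?_⟩
    have : d * (d⁻¹ * h) = d * d := by rw [hfix]
    rw [← mul_assoc, mul_inv_cancel, one_mul] at this
    exact this.symm
  -- conclude
  have hinj : ({g : G | (cayleyGraph S).dist 1 g = 4} : Set G).ncard ≤
      ({g : G | (cayleyGraph S).dist 1 g = 2} : Set G).ncard := by
    set f : G → G := fun h =>
      if hh : (cayleyGraph S).dist 1 h = 4 then (key h hh).choose else 1 with hf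
    refine Set.ncard_le_ncard_of_injOn f ?_ ?_ (Set.toFinite _)
    · intro a ha
      simp only [Set.mem_setOf_eq] at ha ⊢
      simp only [hf]
      rw [dif_pos ha]
      exact (key a ha).choose_spec.1
    · intro a ha b hb hab
      simp only [Set.mem_setOf_eq] at ha hb
      simp only [hf] at hab
      rw [dif_pos ha, dif_pos hb] at hab
      have e1 := (key a ha).choose_spec.2
      have e2 := (key b hb).choose_spec.2
      rw [← e1, ← e2, hab]
  rw [drg_k4 hd 1, drg_k2 hd 1] at hinj
  omega
end

section
/- For every finite group G and every inverse-closed subset S ⊆ G with 1 ∉ S, the Cayley graph Cay(G,S) is not distance-regular with intersection array {6,4,2,1; 1,1,4,6}. Equivalently, the collinearity graph of the 3-cover of the generalized quadrangle GQ(2,2) — the unique distance-regular graph with this intersection array, on 45 vertices (a halved graph of the Foster graph) — is not a Cayley graph; consequently the Foster graph is not a Cayley graph. -/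
open Finset

private lemma ncard_eq_filter_card {V : Type*} [Fintype V] (P : V → Prop) [DecidablePred P] :
    {z | P z}.ncard = (Finset.univ.filter P).card := by
  rw [← Set.ncard_coe_finset]
  congr 1
  ext z
  simp

private lemma double_count {V : Type*} (A B : Finset V) (R : V → V → Prop) [DecidableRel R]
    {a b : ℕ} (hA : ∀ y ∈ A, (B.filter (fun z => R y z)).card = a)
    (hB : ∀ z ∈ B, (A.filter (fun y => R y z)).card = b) :
    A.card * a = B.card * b := by
  have key : ∑ y ∈ A, (B.filter (fun z => R y z)).card
      = ∑ z ∈ B, (A.filter (fun y => R y z)).card := by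
    simp_rw [Finset.card_filter]
    exact Finset.sum_comm
  calc A.card * a = ∑ _y ∈ A, a := by rw [Finset.sum_const, smul_eq_mul]
    _ = ∑ y ∈ A, (B.filter (fun z => R y z)).card := (Finset.sum_congr rfl hA).symm
    _ = ∑ z ∈ B, (A.filter (fun y => R y z)).card := key
    _ = ∑ _z ∈ B, b := Finset.sum_congr rfl hB
    _ = B.card * b := by rw [Finset.sum_const, smul_eq_mul]

private lemma fact45_3 : (45:ℕ).factorization 3 = 2 := by
  have h : (45:ℕ) = 3 ^ 2 * 5 := by norm_num
  rw [h, Nat.factorization_mul (by norm_num) (by norm_num), Finsupp.add_apply,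
      Nat.Prime.factorization_pow (by norm_num), Finsupp.single_apply,
      Nat.factorization_eq_zero_of_not_dvd (by norm_num)]
  norm_num

private lemma fact45_5 : (45:ℕ).factorization 5 = 1 := by
  have h : (45:ℕ) = 3 ^ 2 * 5 := by norm_num
  rw [h, Nat.factorization_mul (by norm_num) (by norm_num), Finsupp.add_apply,
      Nat.Prime.factorization_pow (by norm_num), Finsupp.single_apply,
      Nat.Prime.factorization (by norm_num), Finsupp.single_apply]
  norm_num

/-- A group of order 45 is commutative. -/
private lemma comm_of_card45 {G : Type*} [Group G] [Fintype G] (hcard : Nat.card G = 45) :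
    ∀ a b : G, a * b = b * a := by
  classical
  -- all Sylow subgroups are normal
  have hnormal : ∀ {p : ℕ} [Fact p.Prime] (P : Sylow p G), (P : Subgroup G).Normal := by
    intro p hp P
    by_cases hdvd : p ∣ 45
    · -- p = 3 or p = 5
      have hp35 : p = 3 ∨ p = 5 := by
        have h9 : (45:ℕ) = 3 * 3 * 5 := by norm_num
        rw [h9] at hdvd
        rcases (Nat.Prime.dvd_mul hp.out).mp hdvd with h | h
        · rcases (Nat.Prime.dvd_mul hp.out).mp h with h' | h' <;>
          · left; exact (Nat.prime_dvd_prime_iff_eq hp.out (by norm_num)).mp h'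
        · right; exact (Nat.prime_dvd_prime_iff_eq hp.out (by norm_num)).mp h
      -- the number of Sylow p-subgroups is 1
      have hcardP : Nat.card P * (P : Subgroup G).index = 45 := by
        rw [Subgroup.card_mul_index, hcard]
      have hmul : Nat.card ↥(P : Subgroup G) = p ^ (45:ℕ).factorization p := by
        rw [Sylow.card_eq_multiplicity, hcard]
      have hdvdk := Sylow.card_dvd_index P
      have hmod := card_sylow_modEq_one p G
      have hk1 : Nat.card (Sylow p G) = 1 := by
        rcases hp35 with rfl | rfl
        · rw [hmul, fact45_3] at hcardP
          have hidx : (P : Subgroup G).index = 5 := by omega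
          rw [hidx] at hdvdk
          rcases (Nat.Prime.eq_one_or_self_of_dvd (by norm_num) _ hdvdk) with h | h
          · exact h
          · exfalso
            rw [h] at hmod
            exact absurd hmod (by decide)
        · rw [hmul, fact45_5] at hcardP
          have hidx : (P : Subgroup G).index = 9 := by omega
          rw [hidx] at hdvdk
          have hkpos : 0 < Nat.card (Sylow 5 G) := Nat.card_pos
          have hkle : Nat.card (Sylow 5 G) ≤ 9 := Nat.le_of_dvd (by norm_num) hdvdk
          set k := Nat.card (Sylow 5 G) with hk
          interval_cases k <;>
            first
              | rfl
              | (exfalso; revert hmod; decide)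
              | (exfalso; revert hdvdk; decide)
      have hsub : Subsingleton (Sylow p G) := (Nat.card_eq_one_iff_unique.mp hk1).1
      refine Subgroup.normalizer_eq_top_iff.mp ?_
      rw [eq_top_iff]
      intro g _
      exact Sylow.smul_eq_iff_mem_normalizer.mp (Subsingleton.elim _ _)
    · -- p does not divide 45: the Sylow p-subgroup is trivial
      have hmul : Nat.card ↥(P : Subgroup G) = p ^ (45:ℕ).factorization p := by
        rw [Sylow.card_eq_multiplicity, hcard]
      rw [Nat.factorization_eq_zero_of_not_dvd hdvd, pow_zero] at hmul
      have hbot : (P : Subgroup G) = ⊥ := Subgroup.card_eq_one.mp hmul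
      rw [hbot]
      infer_instance
  -- elements of each Sylow subgroup commute with each other
  have hsylow : ∀ (p : ℕ) (hp : Fact p.Prime) (P : Sylow p G)
      (x y : ↥(P : Subgroup G)), x * y = y * x := by
    intro p hp P x y
    have hmul : Nat.card ↥(P : Subgroup G) = p ^ (45:ℕ).factorization p := by
      rw [Sylow.card_eq_multiplicity, hcard]
    by_cases hdvd : p ∣ 45
    · have hp35 : p = 3 ∨ p = 5 := by
        have h9 : (45:ℕ) = 3 * 3 * 5 := by norm_num
        rw [h9] at hdvd
        rcases (Nat.Prime.dvd_mul hp.out).mp hdvd with h | h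
        · rcases (Nat.Prime.dvd_mul hp.out).mp h with h' | h' <;>
          · left; exact (Nat.prime_dvd_prime_iff_eq hp.out (by norm_num)).mp h'
        · right; exact (Nat.prime_dvd_prime_iff_eq hp.out (by norm_num)).mp h
      rcases hp35 with rfl | rfl
      · have hc9 : Nat.card ↥(P : Subgroup G) = 3 ^ 2 := by rw [hmul, fact45_3]
        exact IsPGroup.commutative_of_card_eq_prime_sq hc9 x y
      · have hc5 : Nat.card ↥(P : Subgroup G) = 5 := by rw [hmul, fact45_5, pow_one]
        haveI := isCyclic_of_prime_card (p := 5) hc5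
        exact (IsCyclic.commGroup (α := ↥(P : Subgroup G))).mul_comm x y
    · have hone : Nat.card ↥(P : Subgroup G) = 1 := by
        rw [hmul, Nat.factorization_eq_zero_of_not_dvd hdvd, pow_zero]
      haveI : Subsingleton ↥(P : Subgroup G) := (Nat.card_eq_one_iff_unique.mp hone).1
      exact Subsingleton.elim _ _
  -- the direct product decomposition
  have e := Sylow.directProductOfNormal (G := G) hnormal
  have hsrc : ∀ a b : (∀ p : (Nat.card G).primeFactors, ∀ P : Sylow p G, P),
      a * b = b * a := by
    intro a b
    funext p P
    haveI hp : Fact (p : ℕ).Prime := Fact.mk (Nat.prime_of_mem_primeFactors p.2)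
    exact hsylow (p : ℕ) hp P (a p P) (b p P)
  intro a b
  obtain ⟨x, rfl⟩ := e.surjective a
  obtain ⟨y, rfl⟩ := e.surjective b
  rw [← map_mul, ← map_mul, hsrc x y]

/-- The collinearity graph of the 3-cover of GQ(2,2) (a halved graph of the Foster graph),
the unique distance-regular graph with intersection array {6,4,2,1; 1,1,4,6}, is not a
Cayley graph; consequently the Foster graph is not a Cayley graph. -/
theorem stmt_15 {G : Type*} [Group G] [Fintype G] (S : Set G)
    (hS : ∀ s ∈ S, s⁻¹ ∈ S) (h1 : (1 : G) ∉ S) :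
    ¬ (cayleyGraph S).IsDRGWith [6, 4, 2, 1] [1, 1, 4, 6] := by
  classical
  intro hDRG
  obtain ⟨hconn, -, hdle, -, hint⟩ := hDRG
  set Γ := cayleyGraph S with hΓ
  -- basic adjacency facts
  have hadj : ∀ a b : G, Γ.Adj a b ↔ (a ≠ b ∧ a * b⁻¹ ∈ S) := by
    intro a b
    simp only [hΓ, cayleyGraph]
    constructor
    · rintro ⟨h, h2, _⟩; exact ⟨h, h2⟩
    · rintro ⟨h, h2⟩
      refine ⟨h, h2, ?_⟩
      have := hS _ h2
      simpa using this
  have hadj1 : ∀ z : G, Γ.Adj 1 z ↔ z ∈ S := by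
    intro z
    rw [hadj]
    constructor
    · rintro ⟨hne, hz⟩
      have := hS _ hz
      simpa using this
    · intro hz
      constructor
      · intro h
        exact h1 (h ▸ hz)
      · simpa using hS _ hz
  have hadj_dist : ∀ a b : G, Γ.Adj a b → Γ.dist a b = 1 :=
    fun a b h => SimpleGraph.dist_eq_one_iff_adj.mpr h
  have hdist0 : ∀ a b : G, Γ.dist a b = 0 ↔ a = b := fun a b => hconn.dist_eq_zero_iff
  -- level sets
  let L : ℕ → Finset G := fun i => univ.filter (fun y => Γ.dist 1 y = i)
  have hLmem : ∀ (i : ℕ) (y : G), y ∈ L i ↔ Γ.dist 1 y = i := by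
    intro i y; simp [L]
  have hL0 : L 0 = {1} := by
    ext y
    rw [hLmem, hdist0, Finset.mem_singleton, eq_comm]
  have hcard0 : (L 0).card = 1 := by rw [hL0]; rfl
  have hstep : ∀ i : ℕ, i < 4 →
      (L i).card * ([6,4,2,1].getD i 0) = (L (i+1)).card * ([1,1,4,6].getD i 0) := by
    intro i hi
    apply double_count (R := fun y z => Γ.Adj y z)
    · intro y hy
      have hd : Γ.dist 1 y = i := (hLmem i y).mp hy
      have h := (hint i 1 y hd).1 (by simpa using hi)
      rw [ncard_eq_filter_card] at h
      rw [← h]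
      congr 1
      ext z
      simp only [Finset.mem_filter, Finset.mem_univ, true_and, hLmem]
      tauto
    · intro z hz
      have hd : Γ.dist 1 z = i + 1 := (hLmem _ z).mp hz
      have h := (hint (i+1) 1 z hd).2 (by omega)
      rw [ncard_eq_filter_card] at h
      simp only [Nat.add_sub_cancel] at h
      rw [← h]
      congr 1
      ext y
      simp only [Finset.mem_filter, Finset.mem_univ, true_and, hLmem]
      rw [Γ.adj_comm]
      tauto
  have e0 : (L 0).card * 6 = (L 1).card * 1 := hstep 0 (by norm_num)
  have e1 : (L 1).card * 4 = (L 2).card * 1 := hstep 1 (by norm_num)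
  have e2 : (L 2).card * 2 = (L 3).card * 4 := hstep 2 (by norm_num)
  have e3 : (L 3).card * 1 = (L 4).card * 6 := hstep 3 (by norm_num)
  have hcard1 : (L 1).card = 6 := by omega
  have hcardG : Fintype.card G = 45 := by
    have hfib : (univ : Finset G).card = ∑ i ∈ range 5, (L i).card := by
      apply card_eq_sum_card_fiberwise (f := fun y => Γ.dist 1 y)
      intro y _
      rw [Finset.mem_coe, Finset.mem_range]
      have h4 : Γ.dist 1 y ≤ 4 := by simpa using hdle 1 y
      beta_reduce
      omega
    have : Fintype.card G = (univ : Finset G).card := rfl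
    rw [this, hfib]
    rw [Finset.sum_range_succ, Finset.sum_range_succ, Finset.sum_range_succ,
        Finset.sum_range_succ, Finset.sum_range_one]
    omega
  -- G is commutative
  have hcomm : ∀ a b : G, a * b = b * a :=
    comm_of_card45 (by rw [Nat.card_eq_fintype_card, hcardG])
  -- the connection set as a finset
  have hSfin : S.Finite := Set.toFinite S
  set S' : Finset G := hSfin.toFinset with hS'def
  have hmemS' : ∀ z, z ∈ S' ↔ z ∈ S := fun z => hSfin.mem_toFinset
  have hS'L1 : S' = L 1 := by
    ext z
    rw [hmemS', hLmem]
    constructor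
    · intro hz; exact hadj_dist _ _ ((hadj1 z).mpr hz)
    · intro hz; exact (hadj1 z).mp (SimpleGraph.dist_eq_one_iff_adj.mp hz)
  have hcardS' : S'.card = 6 := by rw [hS'L1, hcard1]
  -- the multiplicity function
  set m : G → ℕ := fun x => ((S' ×ˢ S').filter (fun p => p.1 * p.2 = x)).card with hmdef
  have hsum : ∑ x ∈ univ, m x = 36 := by
    have h := card_eq_sum_card_fiberwise
      (f := fun p : G × G => p.1 * p.2) (s := S' ×ˢ S') (t := univ) (fun _ _ => mem_univ _)
    rw [Finset.card_product, hcardS'] at h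
    exact h.symm
  have hm1 : m 1 = 6 := by
    rw [hmdef, ← hcardS']
    apply Finset.card_bij (fun (p : G × G) _ => p.2)
    · rintro ⟨u, t⟩ hp
      simp only [Finset.mem_filter, Finset.mem_product] at hp
      exact hp.1.2
    · rintro ⟨u, t⟩ hp ⟨u', t'⟩ hp' h
      simp only [Finset.mem_filter, Finset.mem_product] at hp hp'
      have ht' : t = t' := h
      subst ht'
      have h1' : u * t = _ := hp.2
      have h2' : u' * t = _ := hp'.2
      have : u = u' := by
        rw [← h2'] at h1'
        exact mul_right_cancel h1'
      simp [this]
    · intro t ht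
      refine ⟨(t⁻¹, t), ?_, rfl⟩
      simp only [Finset.mem_filter, Finset.mem_product, hmemS']
      refine ⟨⟨hS _ ((hmemS' t).mp ht), (hmemS' t).mp ht⟩, by group⟩
  -- the key bijection: for x ≠ 1, m x counts common neighbors of 1 and x
  have hmB : ∀ x : G, x ≠ 1 →
      m x = (univ.filter (fun z => Γ.Adj x z ∧ Γ.dist 1 z = 1)).card := by
    intro x hx
    rw [hmdef]
    apply Finset.card_bij (fun (p : G × G) _ => p.2)
    · rintro ⟨u, t⟩ hp
      simp only [Finset.mem_filter, Finset.mem_product, hmemS'] at hp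
      obtain ⟨⟨hu, ht⟩, hprod'⟩ := hp
      have hprod : u * t = x := hprod'
      simp only [Finset.mem_filter, Finset.mem_univ, true_and]
      constructor
      · rw [hadj]
        have hxu : x * t⁻¹ = u := by rw [← hprod]; group
        refine ⟨fun hxt => h1 ?_, by rwa [hxu]⟩
        have : u = 1 := by rw [← hxu, hxt]; group
        rwa [this] at hu
      · exact hadj_dist _ _ ((hadj1 t).mpr ht)
    · rintro ⟨u, t⟩ hp ⟨u', t'⟩ hp' h
      simp only [Finset.mem_filter, Finset.mem_product] at hp hp'
      have ht' : t = t' := h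
      subst ht'
      have h1' : u * t = _ := hp.2
      have h2' : u' * t = _ := hp'.2
      have : u = u' := by
        rw [← h2'] at h1'
        exact mul_right_cancel h1'
      simp [this]
    · intro z hz
      simp only [Finset.mem_filter, Finset.mem_univ, true_and] at hz
      obtain ⟨hzadj, hzd⟩ := hz
      refine ⟨(x * z⁻¹, z), ?_, rfl⟩
      simp only [Finset.mem_filter, Finset.mem_product, hmemS']
      refine ⟨⟨?_, ?_⟩, by group⟩
      · exact ((hadj x z).mp hzadj).2
      · exact (hadj1 z).mp (SimpleGraph.dist_eq_one_iff_adj.mp hzd)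
  -- λ = 1 : vertices at distance 1 have exactly one common neighbor with 1
  have hB1 : ∀ x : G, Γ.dist 1 x = 1 →
      (univ.filter (fun z => Γ.Adj x z ∧ Γ.dist 1 z = 1)).card = 1 := by
    intro x hd
    have hN : (univ.filter (fun z => Γ.Adj x z)).card = 6 := by
      have h := (hint 0 x x (Γ.dist_self)).1 (by norm_num)
      rw [ncard_eq_filter_card] at h
      have h' : (univ.filter (fun z => Γ.Adj x z ∧ Γ.dist x z = 0 + 1)).card = 6 := h
      rw [← h']
      congr 1
      ext z
      simp only [Finset.mem_filter, Finset.mem_univ, true_and, zero_add]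
      exact ⟨fun h' => ⟨h', hadj_dist _ _ h'⟩, fun h' => h'.1⟩
    have hA : (univ.filter (fun z => Γ.Adj x z ∧ Γ.dist 1 z = 2)).card = 4 := by
      have h := (hint 1 1 x hd).1 (by norm_num)
      rw [ncard_eq_filter_card] at h
      exact h
    have hC : (univ.filter (fun z => Γ.Adj x z ∧ Γ.dist 1 z = 0)).card = 1 := by
      have h := (hint 1 1 x hd).2 (le_refl 1)
      rw [ncard_eq_filter_card] at h
      exact h
    have hble : ∀ z, Γ.Adj x z → Γ.dist 1 z < 3 := by
      intro z hz
      have h3 := hconn.dist_triangle (u := 1) (v := x) (w := z)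
      have h4 : Γ.dist x z = 1 := hadj_dist _ _ hz
      omega
    have hsplit : (univ.filter (fun z => Γ.Adj x z)).card
        = ∑ i ∈ range 3, ((univ.filter (fun z => Γ.Adj x z)).filter
            (fun z => Γ.dist 1 z = i)).card := by
      apply card_eq_sum_card_fiberwise (f := fun z => Γ.dist 1 z)
      intro z hz
      rw [Finset.mem_coe, Finset.mem_range]
      exact hble z ((Finset.mem_filter.mp hz).2)
    rw [hN] at hsplit
    simp only [Finset.filter_filter] at hsplit
    rw [Finset.sum_range_succ, Finset.sum_range_succ, Finset.sum_range_one] at hsplit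
    omega
  -- c₂ = 1 : vertices at distance 2 have exactly one common neighbor with 1
  have hB2 : ∀ x : G, Γ.dist 1 x = 2 →
      (univ.filter (fun z => Γ.Adj x z ∧ Γ.dist 1 z = 1)).card = 1 := by
    intro x hd
    have h := (hint 2 1 x hd).2 (by norm_num)
    rw [ncard_eq_filter_card] at h
    exact h
  -- the main local bound
  have hmle : ∀ x : G, x ≠ 1 → m x ≤ 1 ∧ (m x = 1 → ∃ t ∈ S', t * t = x) := by
    intro x hx
    have hb := hmB x hx
    have key : m x ≤ 1 := by
      rcases Nat.eq_zero_or_pos (m x) with h0 | hpos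
      · omega
      · have hpos' : (0:ℕ) < ((S' ×ˢ S').filter (fun p => p.1 * p.2 = x)).card := by
          rw [hmdef] at hpos; exact hpos
        obtain ⟨p, hp⟩ := Finset.card_pos.mp hpos'
        simp only [Finset.mem_filter, Finset.mem_product, hmemS'] at hp
        obtain ⟨⟨hu, ht⟩, hprod⟩ := hp
        have hadjxt : Γ.Adj x p.2 := by
          rw [hadj]
          have hxu : x * p.2⁻¹ = p.1 := by rw [← hprod]; group
          refine ⟨fun hxt => h1 ?_, by rwa [hxu]⟩
          have : p.1 = 1 := by rw [← hxu, hxt]; group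
          rwa [this] at hu
        have hdt : Γ.dist 1 p.2 = 1 := hadj_dist _ _ ((hadj1 p.2).mpr ht)
        have hle2 : Γ.dist 1 x ≤ 2 := by
          have h3 := hconn.dist_triangle (u := 1) (v := p.2) (w := x)
          have h4 : Γ.dist p.2 x = 1 := hadj_dist _ _ hadjxt.symm
          omega
        have hge1 : Γ.dist 1 x ≠ 0 := fun h => hx (((hdist0 _ _).mp h).symm)
        rcases (by omega : Γ.dist 1 x = 1 ∨ Γ.dist 1 x = 2) with h | h
        · rw [hb, hB1 x h]
        · rw [hb, hB2 x h]
    refine ⟨key, ?_⟩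
    intro h1x
    have h1x' : ((S' ×ˢ S').filter (fun p => p.1 * p.2 = x)).card = 1 := h1x
    obtain ⟨p, hp⟩ := Finset.card_eq_one.mp h1x'
    have hpmem : p ∈ (S' ×ˢ S').filter (fun p => p.1 * p.2 = x) := by
      rw [hp]; exact Finset.mem_singleton_self p
    simp only [Finset.mem_filter, Finset.mem_product] at hpmem
    have hswap : (p.2, p.1) ∈ (S' ×ˢ S').filter (fun p => p.1 * p.2 = x) := by
      simp only [Finset.mem_filter, Finset.mem_product]
      refine ⟨⟨hpmem.1.2, hpmem.1.1⟩, ?_⟩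
      show p.2 * p.1 = x
      rw [hcomm p.2 p.1]
      exact hpmem.2
    rw [hp, Finset.mem_singleton] at hswap
    have heq : p.2 = p.1 := by
      have := congrArg Prod.fst hswap
      simpa using this
    exact ⟨p.2, hpmem.1.2, by nth_rewrite 1 [heq]; exact hpmem.2⟩
  -- final counting
  set T : Finset G := S'.image (fun t => t * t) with hTdef
  have hfinal : ∑ x ∈ univ.erase 1, m x ≤ 6 := by
    calc ∑ x ∈ univ.erase 1, m x ≤ ∑ x ∈ univ.erase 1, (if x ∈ T then 1 else 0) := by
          apply Finset.sum_le_sum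
          intro x hx
          have hx1 : x ≠ 1 := (Finset.mem_erase.mp hx).1
          obtain ⟨hle, hsq⟩ := hmle x hx1
          by_cases hT : x ∈ T
          · simpa [hT] using hle
          · simp only [hT, if_false]
            rcases Nat.lt_or_ge (m x) 1 with h | h
            · omega
            · exfalso
              obtain ⟨t, ht, htx⟩ := hsq (by omega)
              exact hT (Finset.mem_image.mpr ⟨t, ht, htx⟩)
      _ = ((univ.erase 1).filter (fun x => x ∈ T)).card := by
          simp only [Finset.sum_boole, Nat.cast_id]
      _ ≤ T.card := Finset.card_le_card (fun x hx => (Finset.mem_filter.mp hx).2)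
      _ ≤ S'.card := Finset.card_image_le
      _ = 6 := hcardS'
  have htotal := Finset.add_sum_erase univ m (mem_univ 1)
  omega
end

section
/- For every finite group G of order 102 and every inverse-closed subset S ⊆ G with 1 ∉ S, the Cayley graph Cay(G,S) is not distance-regular with intersection array {3,2,2,2,1,1,1; 1,1,1,1,1,1,3}. Equivalently, the Biggs-Smith graph — the unique distance-regular graph with this intersection array, on 102 vertices — is not a Cayley graph. -/
section Aux

variable {V : Type*} [Finite V] {Γ : SimpleGraph V}

/-- In a BS-distance-regular graph, every vertex has degree 3. -/
lemma BS_deg3 (h : Γ.IsDRGWith [3, 2, 2, 2, 1, 1, 1] [1, 1, 1, 1, 1, 1, 3]) (y : V) :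
    {z | Γ.Adj y z}.ncard = 3 := by
  have h0 := (h.2.2.2.2 0 y y (SimpleGraph.dist_self)).1 (by norm_num)
  have hset : {z | Γ.Adj y z ∧ Γ.dist y z = 0 + 1} = {z | Γ.Adj y z} := by
    ext z
    simp only [Set.mem_setOf_eq, zero_add, SimpleGraph.dist_eq_one_iff_adj, and_self]
  rw [hset] at h0
  simpa using h0

/-- The partition of the neighbourhood of a vertex at distance `i ≥ 1` by distances. -/
lemma BS_nbhd_split (h : Γ.IsDRGWith [3, 2, 2, 2, 1, 1, 1] [1, 1, 1, 1, 1, 1, 3])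
    {x y : V} {i : ℕ} (h1 : 1 ≤ i) (hy : Γ.dist x y = i) :
    {z | Γ.Adj y z ∧ Γ.dist x z = i - 1}.ncard + {z | Γ.Adj y z ∧ Γ.dist x z = i}.ncard
      + {z | Γ.Adj y z ∧ Γ.dist x z = i + 1}.ncard = 3 := by
  have hconn := h.1
  have hsub : ∀ w, Γ.Adj y w →
      Γ.dist x w = i - 1 ∨ Γ.dist x w = i ∨ Γ.dist x w = i + 1 := by
    intro w hw
    have hyw : Γ.dist y w = 1 := SimpleGraph.dist_eq_one_iff_adj.mpr hw
    have hwy : Γ.dist w y = 1 := by rw [SimpleGraph.dist_comm]; exact hyw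
    have t1 : Γ.dist x w ≤ Γ.dist x y + Γ.dist y w := hconn.dist_triangle
    have t2 : Γ.dist x y ≤ Γ.dist x w + Γ.dist w y := hconn.dist_triangle
    omega
  have hU : {z | Γ.Adj y z} =
      ({z | Γ.Adj y z ∧ Γ.dist x z = i - 1} ∪ {z | Γ.Adj y z ∧ Γ.dist x z = i})
        ∪ {z | Γ.Adj y z ∧ Γ.dist x z = i + 1} := by
    ext w
    constructor
    · intro hw
      rcases hsub w hw with h' | h' | h'
      · exact Or.inl (Or.inl ⟨hw, h'⟩)
      · exact Or.inl (Or.inr ⟨hw, h'⟩)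
      · exact Or.inr ⟨hw, h'⟩
    · rintro ((⟨hw, -⟩ | ⟨hw, -⟩) | ⟨hw, -⟩) <;> exact hw
  have hd1 : Disjoint {z | Γ.Adj y z ∧ Γ.dist x z = i - 1} {z | Γ.Adj y z ∧ Γ.dist x z = i} := by
    rw [Set.disjoint_left]
    rintro w ⟨-, e1⟩ ⟨-, e2⟩
    omega
  have hd2 : Disjoint ({z | Γ.Adj y z ∧ Γ.dist x z = i - 1} ∪ {z | Γ.Adj y z ∧ Γ.dist x z = i})
      {z | Γ.Adj y z ∧ Γ.dist x z = i + 1} := by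
    rw [Set.disjoint_left]
    rintro w (⟨-, e1⟩ | ⟨-, e1⟩) ⟨-, e2⟩ <;> omega
  have hdeg := BS_deg3 h y
  rw [hU, Set.ncard_union_eq hd2 (Set.toFinite _) (Set.toFinite _),
    Set.ncard_union_eq hd1 (Set.toFinite _) (Set.toFinite _)] at hdeg
  omega

/-- The key step lemma: a non-backtracking extension of a geodesic of length `i ≤ 3`
increases the distance. -/
lemma BS_step (h : Γ.IsDRGWith [3, 2, 2, 2, 1, 1, 1] [1, 1, 1, 1, 1, 1, 3])
    {x p y z : V} {i : ℕ} (h1 : 1 ≤ i) (h3 : i ≤ 3)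
    (hp : Γ.dist x p = i - 1) (hy : Γ.dist x y = i)
    (hyp : Γ.Adj y p) (hyz : Γ.Adj y z) (hzp : z ≠ p) :
    Γ.dist x z = i + 1 := by
  have hconn := h.1
  have hmain := h.2.2.2.2 i x y hy
  have hbv : List.getD [3, 2, 2, 2, 1, 1, 1] i 0 = 2 := by interval_cases i <;> rfl
  have hcv : List.getD [1, 1, 1, 1, 1, 1, 3] (i - 1) 0 = 1 := by interval_cases i <;> rfl
  have hB : {w | Γ.Adj y w ∧ Γ.dist x w = i + 1}.ncard = 2 := by
    have := hmain.1 (by simp only [List.length]; omega)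
    rwa [hbv] at this
  have hA : {w | Γ.Adj y w ∧ Γ.dist x w = i - 1}.ncard = 1 := by
    have := hmain.2 h1
    rwa [hcv] at this
  have hsplit := BS_nbhd_split h h1 hy
  have hM : {w | Γ.Adj y w ∧ Γ.dist x w = i}.ncard = 0 := by omega
  have hMe : {w | Γ.Adj y w ∧ Γ.dist x w = i} = ∅ :=
    (Set.ncard_eq_zero (Set.toFinite _)).mp hM
  -- distance of z is within 1 of i
  have hyz1 : Γ.dist y z = 1 := SimpleGraph.dist_eq_one_iff_adj.mpr hyz
  have hzy1 : Γ.dist z y = 1 := by rw [SimpleGraph.dist_comm]; exact hyz1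
  have t1 : Γ.dist x z ≤ Γ.dist x y + Γ.dist y z := hconn.dist_triangle
  have t2 : Γ.dist x y ≤ Γ.dist x z + Γ.dist z y := hconn.dist_triangle
  have htri : Γ.dist x z = i - 1 ∨ Γ.dist x z = i ∨ Γ.dist x z = i + 1 := by omega
  rcases htri with h' | h' | h'
  · obtain ⟨a, ha⟩ := Set.ncard_eq_one.mp hA
    have hpa : p ∈ {w | Γ.Adj y w ∧ Γ.dist x w = i - 1} := ⟨hyp, hp⟩
    have hza : z ∈ {w | Γ.Adj y w ∧ Γ.dist x w = i - 1} := ⟨hyz, h'⟩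
    rw [ha, Set.mem_singleton_iff] at hpa hza
    exact absurd (hza.trans hpa.symm) hzp
  · have : z ∈ {w | Γ.Adj y w ∧ Γ.dist x w = i} := ⟨hyz, h'⟩
    rw [hMe] at this
    exact this.elim
  · exact h'

end Aux

section GroupAux

/-- A walk in a Cayley graph certifies membership in the closure of `S`. -/
lemma cayley_walk_mem_closure {G : Type*} [Group G] {S : Set G} :
    ∀ {a b : G}, (cayleyGraph S).Walk a b → b * a⁻¹ ∈ Subgroup.closure S := by
  intro a b w
  induction w with
  | nil => simpa using one_mem _
  | @cons a c b hadj p ih =>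
      have h1 : c * a⁻¹ ∈ S := hadj.2.2
      have h2 : (b * c⁻¹) * (c * a⁻¹) ∈ Subgroup.closure S :=
        mul_mem ih (Subgroup.subset_closure h1)
      simpa [mul_assoc] using h2

/-- A Sylow subgroup for which the Sylow counting forces uniqueness gives a
subsingleton Sylow type. -/
lemma sylow_subsingleton_of {p : ℕ} [Fact p.Prime] {G : Type*} [Group G] [Finite G]
    (P : Sylow p G)
    (hgt : ∀ n : ℕ, n ∣ (P : Subgroup G).index → n ≡ 1 [MOD p] → n = 1) :
    Subsingleton (Sylow p G) := by
  have hmod := card_sylow_modEq_one p G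
  have hdvd := Sylow.card_dvd_index P
  have h1 : Nat.card (Sylow p G) = 1 := hgt _ hdvd hmod
  exact (Nat.card_eq_one_iff_unique.mp h1).1

/-- A unique Sylow subgroup is normal. -/
lemma sylow_normal_of_subsingleton {p : ℕ} {G : Type*} [Group G]
    [Subsingleton (Sylow p G)] (P : Sylow p G) : (P : Subgroup G).Normal := by
  rw [← Subgroup.normalizer_eq_top_iff]
  erw [← Sylow.stabilizer_eq_normalizer]
  rw [Subgroup.eq_top_iff']
  intro g
  rw [MulAction.mem_stabilizer_iff]
  exact Subsingleton.elim _ _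

end GroupAux

/-- The Biggs-Smith graph, the unique distance-regular graph with intersection array
{3,2,2,2,1,1,1; 1,1,1,1,1,1,3}, on 102 vertices, is not a Cayley graph. -/
theorem stmt_16 {G : Type*} [Group G] [Fintype G] (S : Set G)
    (hS : ∀ s ∈ S, s⁻¹ ∈ S) (h1 : (1 : G) ∉ S)
    (hG : Fintype.card G = 102) :
    ¬ (cayleyGraph S).IsDRGWith [3, 2, 2, 2, 1, 1, 1] [1, 1, 1, 1, 1, 1, 3] := by
  intro hD
  classical
  have hNatG : Nat.card G = 102 := by rw [Nat.card_eq_fintype_card, hG]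
  set Γ := cayleyGraph S with hΓdef
  have hconn : Γ.Connected := hD.1
  -- basic adjacency helpers
  have mkAdj : ∀ {a b : G}, a ≠ b → a * b⁻¹ ∈ S → Γ.Adj a b := by
    intro a b hne hmem
    exact ⟨hne, hmem, by simpa [mul_inv_rev] using hS _ hmem⟩
  have adj_one : ∀ {z : G}, z ∈ S → Γ.Adj 1 z := by
    intro z hz
    refine mkAdj (fun h => h1 (h.symm ▸ hz)) ?_
    simpa using hS _ hz
  have adj_mem : ∀ {z : G}, Γ.Adj 1 z → z ∈ S := by
    intro z h
    simpa using h.2.2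
  -- S has exactly 3 elements
  have hS3 : S.ncard = 3 := by
    have hdeg := BS_deg3 hD (1 : G)
    have hset : {z | Γ.Adj 1 z} = S := Set.ext fun z => ⟨adj_mem, adj_one⟩
    rwa [hset] at hdeg
  -- S generates G
  have hclos : Subgroup.closure S = ⊤ := by
    rw [Subgroup.eq_top_iff']
    intro g
    obtain ⟨w⟩ := hconn.preconnected 1 g
    have := cayley_walk_mem_closure w
    simpa using this
  -- group theory: normal subgroup N of index 2 (order 51)
  haveI f17 : Fact (Nat.Prime 17) := ⟨by norm_num⟩
  haveI f3 : Fact (Nat.Prime 3) := ⟨by norm_num⟩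
  obtain ⟨P⟩ := (Sylow.nonempty : Nonempty (Sylow 17 G))
  have hfact102 : (Nat.card G).factorization 17 = 1 := by
    rw [hNatG, show (102 : ℕ) = 17 * 6 from rfl,
      Nat.factorization_mul (by norm_num) (by norm_num)]
    rw [Finsupp.add_apply, (Nat.Prime.factorization (by norm_num)),
      Nat.factorization_eq_zero_of_not_dvd (by norm_num)]
    simp
  have hPcard : Nat.card (P : Subgroup G) = 17 := by
    rw [Sylow.card_eq_multiplicity, hfact102, pow_one]
  have hPind : (P : Subgroup G).index = 6 := by
    have := Subgroup.card_mul_index (P : Subgroup G)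
    rw [hPcard, hNatG] at this
    omega
  haveI hPsub : Subsingleton (Sylow 17 G) := by
    refine sylow_subsingleton_of P ?_
    intro n hdvd hmod
    rw [hPind] at hdvd
    have hle : n ≤ 6 := Nat.le_of_dvd (by norm_num) hdvd
    have : n % 17 = 1 % 17 := hmod
    omega
  haveI hPnorm : (P : Subgroup G).Normal := sylow_normal_of_subsingleton P
  set Q := G ⧸ (P : Subgroup G) with hQdef
  have hQcard : Nat.card Q = 6 := by
    rw [← Subgroup.index_eq_card]
    exact hPind
  haveI : Finite Q := Nat.finite_of_card_ne_zero (by rw [hQcard]; norm_num)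
  obtain ⟨R⟩ := (Sylow.nonempty : Nonempty (Sylow 3 Q))
  have hfact6 : (Nat.card Q).factorization 3 = 1 := by
    rw [hQcard, show (6 : ℕ) = 3 * 2 from rfl,
      Nat.factorization_mul (by norm_num) (by norm_num)]
    rw [Finsupp.add_apply, (Nat.Prime.factorization (by norm_num)),
      Nat.factorization_eq_zero_of_not_dvd (by norm_num)]
    simp
  have hRcard : Nat.card (R : Subgroup Q) = 3 := by
    rw [Sylow.card_eq_multiplicity, hfact6, pow_one]
  have hRind : (R : Subgroup Q).index = 2 := by
    have := Subgroup.card_mul_index (R : Subgroup Q)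
    rw [hRcard, hQcard] at this
    omega
  haveI hRsub : Subsingleton (Sylow 3 Q) := by
    refine sylow_subsingleton_of R ?_
    intro n hdvd hmod
    rw [hRind] at hdvd
    have hle : n ≤ 2 := Nat.le_of_dvd (by norm_num) hdvd
    have : n % 3 = 1 % 3 := hmod
    omega
  haveI hRnorm : (R : Subgroup Q).Normal := sylow_normal_of_subsingleton R
  set N : Subgroup G := Subgroup.comap (QuotientGroup.mk' (P : Subgroup G)) (R : Subgroup Q)
    with hNdef
  haveI hNnorm : N.Normal := Subgroup.Normal.comap hRnorm _
  have hNind : N.index = 2 := by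
    rw [hNdef, Subgroup.index_comap_of_surjective _ (QuotientGroup.mk'_surjective _)]
    exact hRind
  have hNcard : Nat.card N = 51 := by
    have := Subgroup.card_mul_index N
    rw [hNind, hNatG] at this
    omega
  have hNne : N ≠ ⊤ := by
    intro h
    rw [h, Subgroup.card_top, hNatG] at hNcard
    norm_num at hNcard
  -- index 2 pigeonhole
  have hquot2 : Nat.card (G ⧸ N) = 2 := by
    rw [← Subgroup.index_eq_card]
    exact hNind
  have hpigeon : ∀ a b : G, a ∉ N → b ∉ N → a * b⁻¹ ∈ N := by
    intro a b ha hb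
    obtain ⟨q, -, huniq⟩ := (Nat.card_eq_two_iff' (1 : G ⧸ N)).mp hquot2
    have hψa : (QuotientGroup.mk' N) a ≠ 1 := by
      intro h
      exact ha ((QuotientGroup.eq_one_iff a).mp h)
    have hψb : (QuotientGroup.mk' N) b ≠ 1 := by
      intro h
      exact hb ((QuotientGroup.eq_one_iff b).mp h)
    have heq : (QuotientGroup.mk' N) a = (QuotientGroup.mk' N) b :=
      (huniq _ hψa).trans (huniq _ hψb).symm
    have : (QuotientGroup.mk' N) (a * b⁻¹) = 1 := by
      rw [map_mul, map_inv, heq, mul_inv_cancel]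
    exact (QuotientGroup.eq_one_iff _).mp this
  by_cases hSN : ∀ a ∈ S, a ∉ N
  · -- bipartite-type contradiction
    have hflip : ∀ {a b : G}, Γ.Adj a b → ((a ∈ N) ↔ ¬(b ∈ N)) := by
      intro a b hab
      have hnot : a * b⁻¹ ∉ N := hSN _ hab.2.1
      constructor
      · intro haN hbN
        exact hnot (mul_mem haN (inv_mem hbN))
      · intro hbN
        by_contra haN
        exact hnot (hpigeon a b haN hbN)
    have hwalk : ∀ {a b : G} (w : Γ.Walk a b), ((a ∈ N) ↔ (b ∈ N)) ↔ Even w.length := by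
      intro a b w
      induction w with
      | nil => simp
      | @cons a c b hadj p ih =>
          have h' := hflip hadj
          simp only [SimpleGraph.Walk.length_cons, Nat.even_add_one]
          tauto
    have heven : ∀ {a b : G}, Even (Γ.dist a b) → ((a ∈ N) ↔ (b ∈ N)) := by
      intro a b hev
      obtain ⟨w, hw⟩ := hconn.exists_walk_length_eq_dist a b
      exact (hwalk w).mpr (by rw [hw]; exact hev)
    obtain ⟨x, y, hxy⟩ := hD.2.2.2.1
    have hxy7 : Γ.dist x y = 7 := by simpa using hxy
    -- descend to a vertex at distance 4
    have h7 := (hD.2.2.2.2 7 x y hxy7).2 (by norm_num)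
    obtain ⟨z6, hz6a, hz6d⟩ := Set.nonempty_of_ncard_ne_zero (s :=
      {z | Γ.Adj y z ∧ Γ.dist x z = 7 - 1}) (by rw [h7]; decide)
    have hz6d' : Γ.dist x z6 = 6 := by omega
    have h6 := (hD.2.2.2.2 6 x z6 hz6d').2 (by norm_num)
    obtain ⟨z5, hz5a, hz5d⟩ := Set.nonempty_of_ncard_ne_zero (s :=
      {z | Γ.Adj z6 z ∧ Γ.dist x z = 6 - 1}) (by rw [h6]; decide)
    have hz5d' : Γ.dist x z5 = 5 := by omega
    have h5 := (hD.2.2.2.2 5 x z5 hz5d').2 (by norm_num)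
    obtain ⟨z4, hz4a, hz4d⟩ := Set.nonempty_of_ncard_ne_zero (s :=
      {z | Γ.Adj z5 z ∧ Γ.dist x z = 5 - 1}) (by rw [h5]; decide)
    have hz4d' : Γ.dist x z4 = 4 := by omega
    -- a₄ = 1 : there is a neighbour of z4 at distance 4
    have hmain4 := hD.2.2.2.2 4 x z4 hz4d'
    have hA4 : {z | Γ.Adj z4 z ∧ Γ.dist x z = 4 - 1}.ncard = 1 := by
      have := hmain4.2 (by norm_num)
      rwa [show List.getD [1, 1, 1, 1, 1, 1, 3] (4 - 1) 0 = 1 from rfl] at this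
    have hB4 : {z | Γ.Adj z4 z ∧ Γ.dist x z = 4 + 1}.ncard = 1 := by
      have := hmain4.1 (by norm_num)
      rwa [show List.getD [3, 2, 2, 2, 1, 1, 1] 4 0 = 1 from rfl] at this
    have hsplit := BS_nbhd_split hD (by norm_num : 1 ≤ 4) hz4d'
    have hM4 : {z | Γ.Adj z4 z ∧ Γ.dist x z = 4}.ncard = 1 := by omega
    obtain ⟨w, hwa, hwd⟩ := Set.nonempty_of_ncard_ne_zero (s :=
      {z | Γ.Adj z4 z ∧ Γ.dist x z = 4}) (by rw [hM4]; norm_num)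
    have e1 := heven (a := x) (b := z4) (by rw [hz4d']; decide)
    have e2 := heven (a := x) (b := w) (by rw [hwd]; decide)
    have e3 := hflip hwa
    tauto
  · -- there is s ∈ S ∩ N
    push_neg at hSN
    obtain ⟨s, hsS, hsN⟩ := hSN
    have hs1 : s ≠ 1 := fun h => h1 (h ▸ hsS)
    have hsiS : s⁻¹ ∈ S := hS s hsS
    have hspow : s ^ (51 : ℕ) = 1 := by
      have h51 : (⟨s, hsN⟩ : N) ^ (51 : ℕ) = 1 := by
        rw [← hNcard]
        exact pow_card_eq_one'
      have := congrArg (Subtype.val) h51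
      simpa using this
    have hord : orderOf s ∣ 51 := orderOf_dvd_of_pow_eq_one hspow
    have hordne : orderOf s ≠ 1 := by
      simpa [orderOf_eq_one_iff] using hs1
    have hsinv : s⁻¹ ≠ s := by
      intro hinv
      have h2 : s ^ (2 : ℕ) = 1 := by
        rw [pow_two]
        nth_rewrite 2 [← hinv]
        exact mul_inv_cancel s
      have hd2 : orderOf s ∣ 2 := orderOf_dvd_of_pow_eq_one h2
      have hdd := Nat.dvd_gcd hd2 hord
      rw [show Nat.gcd 2 51 = 1 from by norm_num, Nat.dvd_one] at hdd
      exact hordne hdd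
    -- find the third element t of S
    have hpair_ne : ¬ S ⊆ {s, s⁻¹} := by
      intro hsub
      have hle := Set.ncard_le_ncard hsub (Set.toFinite _)
      have h2 : ({s, s⁻¹} : Set G).ncard ≤ 2 := by
        have := Set.ncard_insert_le s ({s⁻¹} : Set G)
        simpa using this
      omega
    obtain ⟨t, htS, htpair⟩ : ∃ t ∈ S, t ∉ ({s, s⁻¹} : Set G) := by
      by_contra hc
      push_neg at hc
      exact hpair_ne hc
    have hts : t ≠ s := fun h => htpair (by simp [h])
    have htsi : t ≠ s⁻¹ := fun h => htpair (by simp [h])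
    have ht1 : t ≠ 1 := fun h => h1 (h ▸ htS)
    have hSeq : S = {s, s⁻¹, t} := by
      refine (Set.eq_of_subset_of_ncard_le ?_ ?_ (Set.toFinite _)).symm
      · intro x hx
        simp only [Set.mem_insert_iff, Set.mem_singleton_iff] at hx
        rcases hx with rfl | rfl | rfl
        · exact hsS
        · exact hsiS
        · exact htS
      · rw [hS3]
        rw [Set.ncard_insert_of_notMem (by
          simp only [Set.mem_insert_iff, Set.mem_singleton_iff]
          push_neg
          exact ⟨fun h => hsinv h.symm, fun h => hts h.symm⟩)]
        rw [Set.ncard_pair (fun h => htsi h.symm)]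
    have htN : t ∉ N := by
      intro htN
      have hsub : S ⊆ (N : Set G) := by
        rw [hSeq]
        intro x hx
        simp only [Set.mem_insert_iff, Set.mem_singleton_iff] at hx
        rcases hx with rfl | rfl | rfl
        · exact hsN
        · exact inv_mem hsN
        · exact htN
      have hle : (⊤ : Subgroup G) ≤ N := by
        rw [← hclos]
        exact (Subgroup.closure_le N).mpr hsub
      exact hNne (top_le_iff.mp hle)
    have htinvS : t⁻¹ ∈ S := hS t htS
    have htt : t * t = 1 := by
      have hmem : t⁻¹ ∈ ({s, s⁻¹, t} : Set G) := hSeq ▸ htinvS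
      simp only [Set.mem_insert_iff, Set.mem_singleton_iff] at hmem
      rcases hmem with h | h | h
      · exact absurd (by rw [← inv_inv t, h] : t = s⁻¹) htsi
      · exact absurd (by rw [← inv_inv t, h, inv_inv] : t = s) hts
      · nth_rewrite 2 [← h]
        exact mul_inv_cancel t
    have htinv : t⁻¹ = t := inv_eq_of_mul_eq_one_right htt
    -- common adjacency facts
    have hd1s : Γ.dist 1 s = 1 := SimpleGraph.dist_eq_one_iff_adj.mpr (adj_one hsS)
    have hd1t : Γ.dist 1 t = 1 := SimpleGraph.dist_eq_one_iff_adj.mpr (adj_one htS)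
    have hprodN : ∀ {a : G}, a ∈ N → a * t ∉ N := by
      intro a ha hmem
      exact htN (by
        have h' : t = a⁻¹ * (a * t) := by group
        rw [h']
        exact mul_mem (inv_mem ha) hmem)
    have hneNt : ∀ {a b : G}, a ∈ N → b ∉ N → a ≠ b := fun ha hb h => hb (h ▸ ha)
    -- case on the order of s
    have hcases : orderOf s = 3 ∨ orderOf s = 17 ∨ orderOf s = 51 := by
      have hmem : orderOf s ∈ Nat.divisors 51 := Nat.mem_divisors.mpr ⟨hord, by norm_num⟩
      have : Nat.divisors 51 = {1, 3, 17, 51} := by decide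
      rw [this, Finset.mem_insert, Finset.mem_insert, Finset.mem_insert,
        Finset.mem_singleton] at hmem
      rcases hmem with h | h | h | h
      · exact absurd h hordne
      · exact Or.inl h
      · exact Or.inr (Or.inl h)
      · exact Or.inr (Or.inr h)
    rcases hcases with hord3 | hord17 | hord51
    · -- order 3: triangle 1, s, s²
      have h3 : s ^ (3 : ℕ) = 1 := by rw [← hord3]; exact pow_orderOf_eq_one s
      have hss : s * s = s⁻¹ := by
        refine eq_inv_of_mul_eq_one_left ?_
        calc s * s * s = s ^ (3 : ℕ) := by rw [pow_succ, pow_two]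
          _ = 1 := h3
      have hss1 : s * s ≠ 1 := by
        intro h
        have hd2 : orderOf s ∣ 2 := orderOf_dvd_of_pow_eq_one (by rw [pow_two]; exact h)
        rw [hord3] at hd2
        norm_num at hd2
      have hadj_s_ss : Γ.Adj s (s * s) := by
        refine mkAdj ?_ ?_
        · intro h
          exact hs1 (left_eq_mul.mp h)
        · rw [show s * (s * s)⁻¹ = s⁻¹ from by group]
          exact hsiS
      have hd2 : Γ.dist 1 (s * s) = 2 :=
        BS_step hD le_rfl (by norm_num) (SimpleGraph.dist_self) hd1s
          (adj_one hsS).symm hadj_s_ss hss1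
      have hadj1ss : Γ.Adj 1 (s * s) := by
        rw [hss]
        refine mkAdj (fun h => hs1 (by simpa using h.symm)) ?_
        simpa using hsS
      have hone := SimpleGraph.dist_eq_one_iff_adj.mpr hadj1ss
      omega
    · -- order 17: ⟨s,t⟩ has order at most 34, cannot generate G
      set φ : G →* Q := QuotientGroup.mk' (P : Subgroup G) with hφdef
      have hφs : φ s = 1 := by
        have hd17 : orderOf (φ s) ∣ 17 := (orderOf_map_dvd φ s).trans (dvd_of_eq hord17)
        have hd6 : orderOf (φ s) ∣ 6 := (orderOf_dvd_natCard _).trans (dvd_of_eq hQcard)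
        have h1' : orderOf (φ s) = 1 := by
          have hdd := Nat.dvd_gcd hd17 hd6
          rwa [show Nat.gcd 17 6 = 1 from by norm_num, Nat.dvd_one] at hdd
        rw [orderOf_eq_one_iff] at h1'
        exact h1'
      have htop2 : Subgroup.zpowers (φ t) = ⊤ := by
        have hmap : Subgroup.map φ (Subgroup.closure S) = ⊤ := by
          rw [hclos]
          exact Subgroup.map_top_of_surjective φ (QuotientGroup.mk'_surjective _)
        rw [MonoidHom.map_closure] at hmap
        rw [eq_top_iff, ← hmap]
        refine (Subgroup.closure_le _).mpr ?_
        rintro x ⟨y, hy, rfl⟩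
        rw [hSeq] at hy
        simp only [Set.mem_insert_iff, Set.mem_singleton_iff] at hy
        rcases hy with rfl | rfl | rfl
        · rw [SetLike.mem_coe, hφs]; exact one_mem _
        · rw [SetLike.mem_coe, map_inv, hφs, inv_one]; exact one_mem _
        · exact Subgroup.mem_zpowers _
      have hcard6 : orderOf (φ t) = 6 := by
        calc orderOf (φ t) = Nat.card (Subgroup.zpowers (φ t)) := (Nat.card_zpowers _).symm
          _ = Nat.card (⊤ : Subgroup Q) := by rw [htop2]
          _ = 6 := by rw [Subgroup.card_top, hQcard]
      have hdvd2 : orderOf (φ t) ∣ 2 := by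
        refine orderOf_dvd_of_pow_eq_one ?_
        rw [pow_two, ← map_mul, htt, map_one]
      rw [hcard6] at hdvd2
      norm_num at hdvd2
    · -- order 51: generalized Petersen structure, short cycle
      have hzp_le : Subgroup.zpowers s ≤ N := Subgroup.zpowers_le.mpr hsN
      have hzpcard : Nat.card (Subgroup.zpowers s) = 51 := by
        rw [Nat.card_zpowers, hord51]
      have hNzp : ((Subgroup.zpowers s : Subgroup G) : Set G) = (N : Set G) := by
        refine Set.eq_of_subset_of_ncard_le hzp_le ?_ (Set.toFinite _)
        have e1 : ((N : Subgroup G) : Set G).ncard = 51 := by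
          rw [← Nat.card_coe_set_eq]
          exact hNcard
        have e2 : ((Subgroup.zpowers s : Subgroup G) : Set G).ncard = 51 := by
          rw [← Nat.card_coe_set_eq]
          exact hzpcard
        rw [e1, e2]
      have hmemzp : ∀ {g : G}, g ∈ N → ∃ k : ℤ, s ^ k = g := by
        intro g hg
        have : g ∈ Subgroup.zpowers s := by
          rw [← SetLike.mem_coe, hNzp]
          exact hg
        exact Subgroup.mem_zpowers_iff.mp this
      set u := t * s * t with hu
      have huN : u ∈ N := by
        have := hNnorm.conj_mem s hsN t
        rwa [htinv] at this
      obtain ⟨k, hk⟩ := hmemzp huN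
      have hsu_comm : s * u = u * s := by
        rw [← hk]
        exact ((Commute.refl s).zpow_right k).eq
      have hut : u * t = t * s := by
        rw [hu, mul_assoc, htt, mul_one]
      have htu : t * u = s * t := by
        rw [hu]
        calc t * (t * s * t) = (t * t) * (s * t) := by group
          _ = s * t := by rw [htt, one_mul]
      have htu' : t * u⁻¹ = s⁻¹ * t := by
        refine mul_left_cancel (a := s) ?_
        calc s * (t * u⁻¹) = (s * t) * u⁻¹ := by group
          _ = (t * u) * u⁻¹ := by rw [htu]
          _ = t := by group
          _ = s * (s⁻¹ * t) := by group
      have hts' : t * s⁻¹ = u⁻¹ * t := by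
        refine mul_left_cancel (a := u) ?_
        calc u * (t * s⁻¹) = (u * t) * s⁻¹ := by group
          _ = (t * s) * s⁻¹ := by rw [hut]
          _ = t := by group
          _ = u * (u⁻¹ * t) := by group
      by_cases hus : u = s
      · -- u = s : s and t commute, 4-cycle 1 s st t
        have hcomm : s * t = t * s := by
          have h' := hut
          rw [hus] at h'
          exact h'
        have hst1 : s * t ≠ 1 := by
          intro h
          exact htsi (eq_inv_of_mul_eq_one_right h)
        have hA2 : Γ.Adj s (s * t) := by
          refine mkAdj ?_ ?_
          · intro h
            exact ht1 (left_eq_mul.mp h)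
          · have : s * (s * t)⁻¹ = t := by
              calc s * (s * t)⁻¹ = s * t⁻¹ * s⁻¹ := by group
                _ = s * t * s⁻¹ := by rw [htinv]
                _ = (t * s) * s⁻¹ := by rw [hcomm]
                _ = t := by group
            rw [this]
            exact htS
        have hA3 : Γ.Adj (s * t) t := by
          refine mkAdj ?_ ?_
          · intro h
            have h' : s * t = 1 * t := by rw [h, one_mul]
            exact hs1 (mul_right_cancel h')
          · rw [show (s * t) * t⁻¹ = s from by group]
            exact hsS
        have hd2 : Γ.dist 1 (s * t) = 2 :=
          BS_step hD le_rfl (by norm_num) (SimpleGraph.dist_self) hd1s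
            (adj_one hsS).symm hA2 hst1
        have hK := (hD.2.2.2.2 2 1 (s * t) hd2).2 (by norm_num)
        rw [show List.getD [1, 1, 1, 1, 1, 1, 3] (2 - 1) 0 = 1 from rfl] at hK
        have hsub2 : ({s, t} : Set G) ⊆ {z | Γ.Adj (s * t) z ∧ Γ.dist 1 z = 2 - 1} := by
          intro x hx
          simp only [Set.mem_insert_iff, Set.mem_singleton_iff] at hx
          rcases hx with rfl | rfl
          · exact ⟨hA2.symm, hd1s⟩
          · exact ⟨hA3, hd1t⟩
        have hle := Set.ncard_le_ncard hsub2 (Set.toFinite _)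
        rw [Set.ncard_pair (hneNt hsN htN), hK] at hle
        omega
      · by_cases husi : u = s⁻¹
        · -- u = s⁻¹ : 4-cycle 1 t ts s
          have hts1 : t * s ≠ 1 := by
            intro h
            exact htsi (eq_inv_of_mul_eq_one_left h)
          have hA2 : Γ.Adj t (t * s) := by
            refine mkAdj ?_ ?_
            · intro h
              exact hs1 (left_eq_mul.mp h)
            · have : t * (t * s)⁻¹ = s := by
                calc t * (t * s)⁻¹ = (t * s⁻¹) * t⁻¹ := by group
                  _ = (u⁻¹ * t) * t⁻¹ := by rw [hts']
                  _ = u⁻¹ := by group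
                  _ = s := by rw [husi, inv_inv]
              rw [this]
              exact hsS
          have hA3 : Γ.Adj (t * s) s := by
            refine mkAdj ?_ ?_
            · intro h
              have h' : t * s = 1 * s := by rw [h, one_mul]
              exact ht1 (mul_right_cancel h')
            · rw [show (t * s) * s⁻¹ = t from by group]
              exact htS
          have hA4 : Γ.Adj (t * s) t := by
            refine mkAdj ?_ ?_
            · intro h
              have h' : t * s = t * 1 := by rw [h, mul_one]
              exact hs1 (mul_left_cancel h')
            · have : (t * s) * t⁻¹ = s⁻¹ := by
                rw [htinv, ← hu, husi]
              rw [this]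
              exact hsiS
          have hd2 : Γ.dist 1 (t * s) = 2 :=
            BS_step hD le_rfl (by norm_num) (SimpleGraph.dist_self) hd1t
              (adj_one htS).symm hA2 hts1
          have hK := (hD.2.2.2.2 2 1 (t * s) hd2).2 (by norm_num)
          rw [show List.getD [1, 1, 1, 1, 1, 1, 3] (2 - 1) 0 = 1 from rfl] at hK
          have hsub2 : ({s, t} : Set G) ⊆ {z | Γ.Adj (t * s) z ∧ Γ.dist 1 z = 2 - 1} := by
            intro x hx
            simp only [Set.mem_insert_iff, Set.mem_singleton_iff] at hx
            rcases hx with rfl | rfl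
            · exact ⟨hA3, hd1s⟩
            · exact ⟨hA4, hd1t⟩
          have hle := Set.ncard_le_ncard hsub2 (Set.toFinite _)
          rw [Set.ncard_pair (hneNt hsN htN), hK] at hle
          omega
        · -- u ∉ {s, s⁻¹} : 8-cycle 1, s, ut, sut, su, u, st, t
          have hutN : u * t ∉ N := hprodN huN
          have hstN : s * t ∉ N := hprodN hsN
          have hsutN : s * (u * t) ∉ N := by
            rw [← mul_assoc]
            exact hprodN (mul_mem hsN huN)
          have hut1 : u * t ≠ 1 := by
            intro h
            exact htN ((eq_inv_of_mul_eq_one_right h) ▸ inv_mem huN)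
          have hst1 : s * t ≠ 1 := by
            intro h
            exact htsi (eq_inv_of_mul_eq_one_right h)
          have cA2 : Γ.Adj s (u * t) := by
            refine mkAdj (hneNt hsN hutN) ?_
            have : s * (u * t)⁻¹ = t := by
              calc s * (u * t)⁻¹ = (s * t⁻¹) * u⁻¹ := by group
                _ = (s * t) * u⁻¹ := by rw [htinv]
                _ = (t * u) * u⁻¹ := by rw [htu]
                _ = t := by group
            rw [this]
            exact htS
          have cA3 : Γ.Adj (s * (u * t)) (u * t) := by
            refine mkAdj ?_ ?_
            · intro h
              have h' : s * (u * t) = 1 * (u * t) := by rw [h, one_mul]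
              exact hs1 (mul_right_cancel h')
            · rw [show (s * (u * t)) * (u * t)⁻¹ = s from by group]
              exact hsS
          have cA4 : Γ.Adj (s * (u * t)) (s * u) := by
            refine mkAdj ?_ ?_
            · intro h
              have h' := mul_left_cancel h
              have h'' : u * t = u * 1 := by rw [h', mul_one]
              exact ht1 (mul_left_cancel h'')
            · have : (s * (u * t)) * (s * u)⁻¹ = t := by
                calc (s * (u * t)) * (s * u)⁻¹ = (s * u) * (t * u⁻¹) * s⁻¹ := by group
                  _ = (s * u) * (s⁻¹ * t) * s⁻¹ := by rw [htu']
                  _ = (u * s) * (s⁻¹ * t) * s⁻¹ := by rw [hsu_comm]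
                  _ = u * (t * s⁻¹) := by group
                  _ = u * (u⁻¹ * t) := by rw [hts']
                  _ = t := by group
              rw [this]
              exact htS
          have cA5 : Γ.Adj (s * u) u := by
            refine mkAdj ?_ ?_
            · intro h
              have h' : s * u = 1 * u := by rw [h, one_mul]
              exact hs1 (mul_right_cancel h')
            · rw [show (s * u) * u⁻¹ = s from by group]
              exact hsS
          have cA7 : Γ.Adj (s * t) t := by
            refine mkAdj ?_ ?_
            · intro h
              have h' : s * t = 1 * t := by rw [h, one_mul]
              exact hs1 (mul_right_cancel h')
            · rw [show (s * t) * t⁻¹ = s from by group]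
              exact hsS
          have cA8 : Γ.Adj (s * t) u := by
            refine mkAdj (Ne.symm (hneNt huN hstN)) ?_
            have : (s * t) * u⁻¹ = t := by
              calc (s * t) * u⁻¹ = s * (t * u⁻¹) := by group
                _ = s * (s⁻¹ * t) := by rw [htu']
                _ = t := by group
            rw [this]
            exact htS
          -- distances along the first path
          have cd2 : Γ.dist 1 (u * t) = 2 :=
            BS_step hD le_rfl (by norm_num) (SimpleGraph.dist_self) hd1s
              (adj_one hsS).symm cA2 hut1
          have hsut_ne_s : s * (u * t) ≠ s := by
            intro h
            have h' : s * (u * t) = s * 1 := by rw [h, mul_one]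
            exact hut1 (mul_left_cancel h')
          have cd3 : Γ.dist 1 (s * (u * t)) = 3 :=
            BS_step hD (by norm_num) (by norm_num) hd1s cd2 cA2.symm cA3.symm hsut_ne_s
          have hsu_ne_ut : s * u ≠ u * t := hneNt (mul_mem hsN huN) hutN
          have cd4 : Γ.dist 1 (s * u) = 4 :=
            BS_step hD (by norm_num) (by norm_num) cd2 cd3 cA3 cA4 hsu_ne_ut
          -- distances along the second path
          have cd2' : Γ.dist 1 (s * t) = 2 :=
            BS_step hD le_rfl (by norm_num) (SimpleGraph.dist_self) hd1t
              (adj_one htS).symm cA7.symm hst1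
          have hu_ne_t : u ≠ t := hneNt huN htN
          have cd3' : Γ.dist 1 u = 3 :=
            BS_step hD (by norm_num) (by norm_num) hd1t cd2' cA7 cA8 hu_ne_t
          -- contradiction with c₄ = 1
          have hc4 := (hD.2.2.2.2 4 1 (s * u) cd4).2 (by norm_num)
          rw [show List.getD [1, 1, 1, 1, 1, 1, 3] (4 - 1) 0 = 1 from rfl] at hc4
          have hne_final : s * (u * t) ≠ u := Ne.symm (hneNt huN hsutN)
          have hsub2 : ({s * (u * t), u} : Set G) ⊆
              {z | Γ.Adj (s * u) z ∧ Γ.dist 1 z = 4 - 1} := by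
            intro x hx
            simp only [Set.mem_insert_iff, Set.mem_singleton_iff] at hx
            rcases hx with rfl | rfl
            · exact ⟨cA4.symm, cd3⟩
            · exact ⟨cA5, cd3'⟩
          have hle := Set.ncard_le_ncard hsub2 (Set.toFinite _)
          rw [Set.ncard_pair hne_final, hc4] at hle
          omega
end

section
/- In the symmetric group Sym(4) on four letters {1,2,3,4}, let S = {(1 2 3), (1 3 2), (1 2)(3 4), (1 3), (1 4), (1 2 3 4), (1 4 3 2)} (a set of 7 permutations, written in cycle notation). Then S is inverse-closed, does not contain the identity, and the Cayley graph Cay(Sym(4), S) is distance-regular with intersection array {7,4,1; 1,2,7}. (Since the Klein graph is the unique distance-regular graph with this intersection array, on 24 vertices, this says the Klein graph is a Cayley graph over Sym(4).) -/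
/-- The connection set for the Klein graph inside `Sym(4)` (acting on `{0,1,2,3}` instead of
`{1,2,3,4}`): the permutations `(1 2 3), (1 3 2), (1 2)(3 4), (1 3), (1 4), (1 2 3 4),`
and `(1 4 3 2)`. -/
def kleinConnectionSet : Set (Equiv.Perm (Fin 4)) :=
  {c[(0 : Fin 4), 1, 2], c[(0 : Fin 4), 2, 1], c[(0 : Fin 4), 1] * c[(2 : Fin 4), 3],
    c[(0 : Fin 4), 2], c[(0 : Fin 4), 3], c[(0 : Fin 4), 1, 2, 3], c[(0 : Fin 4), 3, 2, 1]}

/- ===================== auxiliary development ===================== -/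

section Aux

/-- helper to build explicit permutations of `Fin 4` -/
def mk4 (f g : Fin 4 → Fin 4) (h1 : ∀ x, g (f x) = x := by decide)
    (h2 : ∀ x, f (g x) = x := by decide) : Equiv.Perm (Fin 4) :=
  ⟨f, g, h1, h2⟩

/-- the connection set as a list -/
def SL : List (Equiv.Perm (Fin 4)) :=
  [c[(0 : Fin 4), 1, 2], c[(0 : Fin 4), 2, 1], c[(0 : Fin 4), 1] * c[(2 : Fin 4), 3],
    c[(0 : Fin 4), 2], c[(0 : Fin 4), 3], c[(0 : Fin 4), 1, 2, 3], c[(0 : Fin 4), 3, 2, 1]]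

lemma mem_klein_iff (g : Equiv.Perm (Fin 4)) : g ∈ kleinConnectionSet ↔ g ∈ SL := by
  simp [kleinConnectionSet, SL, Set.mem_insert_iff]

instance kleinDecMem : DecidablePred (· ∈ kleinConnectionSet) := fun g =>
  decidable_of_iff _ (mem_klein_iff g).symm

/-- the second sphere -/
def L2 : List (Equiv.Perm (Fin 4)) :=
  [mk4 ![3,2,0,1] ![2,3,1,0],
   mk4 ![2,0,3,1] ![1,3,0,2],
   mk4 ![1,0,2,3] ![1,0,2,3],
   mk4 ![0,2,1,3] ![0,2,1,3],
   mk4 ![3,1,0,2] ![2,1,3,0],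
   mk4 ![2,1,3,0] ![3,1,0,2],
   mk4 ![0,3,1,2] ![0,2,3,1],
   mk4 ![2,3,1,0] ![3,2,0,1],
   mk4 ![3,2,1,0] ![3,2,1,0],
   mk4 ![0,2,3,1] ![0,3,1,2],
   mk4 ![0,1,3,2] ![0,1,3,2],
   mk4 ![1,3,0,2] ![2,0,3,1],
   mk4 ![0,3,2,1] ![0,3,2,1],
   mk4 ![2,3,0,1] ![2,3,0,1]]

/-- the distance-from-identity function -/
def lvl (g : Equiv.Perm (Fin 4)) : ℕ :=
  if g = 1 then 0 else if g ∈ SL then 1 else if g ∈ L2 then 2 else 3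

lemma lvl_zero : ∀ g : Equiv.Perm (Fin 4), lvl g = 0 ↔ g = 1 := by decide
lemma lvl_le : ∀ g : Equiv.Perm (Fin 4), lvl g ≤ 3 := by decide
lemma lvl_step : ∀ g : Equiv.Perm (Fin 4), ∀ s ∈ SL, lvl g ≤ lvl (g * s) + 1 := by decide
lemma lvl_down : ∀ g : Equiv.Perm (Fin 4), g ≠ 1 → ∃ s ∈ SL, lvl (g * s) + 1 = lvl g := by decide
lemma SL_inv : ∀ s ∈ SL, s⁻¹ ∈ SL := by decide
lemma one_not_SL : (1 : Equiv.Perm (Fin 4)) ∉ SL := by decide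

/-- general lemma: a function satisfying the BFS axioms computes graph distance -/
lemma dist_eq_of_f {V : Type*} (Γ : SimpleGraph V) (f : V → V → ℕ)
    (h0 : ∀ x y, f x y = 0 ↔ x = y)
    (h1 : ∀ x y, f x y ≠ 0 → ∃ z, Γ.Adj y z ∧ f x z + 1 = f x y)
    (h2 : ∀ x y z, Γ.Adj y z → f x y ≤ f x z + 1) :
    (∀ x y, Γ.Reachable x y) ∧ ∀ x y, Γ.dist x y = f x y := by
  have walk : ∀ (n : ℕ) (x y : V), f x y = n → ∃ p : Γ.Walk y x, p.length = n := by
    intro n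
    induction n with
    | zero => intro x y h; obtain rfl := (h0 x y).1 h; exact ⟨SimpleGraph.Walk.nil, rfl⟩
    | succ n ih =>
      intro x y h
      obtain ⟨z, hadj, hz⟩ := h1 x y (by omega)
      obtain ⟨q, hq⟩ := ih x z (by omega)
      exact ⟨SimpleGraph.Walk.cons hadj q, by simp [hq]⟩
  have lower : ∀ (x y : V) (p : Γ.Walk y x), f x y ≤ p.length := by
    intro x y p
    induction p with
    | nil => simp [(h0 _ _).2 rfl]
    | @cons a b c hadj q ih =>
      calc f c a ≤ f c b + 1 := h2 c a b hadj
        _ ≤ q.length + 1 := by omega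
        _ = (SimpleGraph.Walk.cons hadj q).length := by simp
  have reach : ∀ x y, Γ.Reachable x y := by
    intro x y
    obtain ⟨p, _⟩ := walk (f x y) x y rfl
    exact ⟨p.reverse⟩
  refine ⟨reach, fun x y => le_antisymm ?_ ?_⟩
  · obtain ⟨p, hp⟩ := walk (f x y) x y rfl
    calc Γ.dist x y ≤ p.reverse.length := SimpleGraph.dist_le _
      _ = f x y := by simp [hp]
  · obtain ⟨p, hp⟩ := (reach x y).exists_walk_length_eq_dist
    calc f x y ≤ p.reverse.length := lower x y p.reverse
      _ = Γ.dist x y := by simp [hp]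

abbrev Γk : SimpleGraph (Equiv.Perm (Fin 4)) := cayleyGraph kleinConnectionSet

lemma adj_iff (y z : Equiv.Perm (Fin 4)) :
    Γk.Adj y z ↔ y ≠ z ∧ y * z⁻¹ ∈ SL ∧ z * y⁻¹ ∈ SL := by
  simp [Γk, cayleyGraph, mem_klein_iff]

lemma klein_dist : (∀ x y, Γk.Reachable x y) ∧
    ∀ x y, Γk.dist x y = lvl (x * y⁻¹) := by
  apply dist_eq_of_f Γk (fun x y => lvl (x * y⁻¹))
  · intro x y
    rw [lvl_zero, mul_inv_eq_one]
  · intro x y h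
    have hne : x * y⁻¹ ≠ 1 := by
      intro h1; rw [h1] at h; exact h (by decide)
    obtain ⟨s, hs, hlvl⟩ := lvl_down _ hne
    refine ⟨s⁻¹ * y, ?_, ?_⟩
    · rw [adj_iff]
      refine ⟨?_, ?_, ?_⟩
      · intro h'
        apply one_not_SL
        have : s = 1 := by
          have := congrArg (· * y⁻¹) h'
          simpa [mul_assoc] using this.symm
        rwa [this] at hs
      · simpa [mul_assoc] using hs
      · simpa [mul_assoc] using SL_inv s hs
    · have : x * (s⁻¹ * y)⁻¹ = x * y⁻¹ * s := by group
      rw [this]; exact hlvl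
  · intro x y z hadj
    rw [adj_iff] at hadj
    have h := lvl_step (x * y⁻¹) (y * z⁻¹) hadj.2.1
    have : x * y⁻¹ * (y * z⁻¹) = x * z⁻¹ := by group
    rwa [this] at h

lemma count_key (x y : Equiv.Perm (Fin 4)) (k : ℕ) :
    {z | Γk.Adj y z ∧ lvl (x * z⁻¹) = k} =
      (fun w => w⁻¹ * y) '' {w | w ∈ SL ∧ lvl (x * y⁻¹ * w) = k} := by
  ext z
  simp only [Set.mem_setOf_eq, Set.mem_image, adj_iff]
  constructor
  · rintro ⟨⟨hne, h1, h2⟩, hl⟩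
    refine ⟨y * z⁻¹, ⟨h1, ?_⟩, by group⟩
    have : x * y⁻¹ * (y * z⁻¹) = x * z⁻¹ := by group
    rw [this]; exact hl
  · rintro ⟨w, ⟨hw, hl⟩, rfl⟩
    refine ⟨⟨?_, ?_, ?_⟩, ?_⟩
    · intro h'
      apply one_not_SL
      have : w = 1 := by
        have := congrArg (· * y⁻¹) h'
        simpa [mul_assoc] using this
      rwa [this] at hw
    · simpa [mul_assoc] using hw
    · simpa [mul_assoc] using SL_inv w hw
    · have : x * (w⁻¹ * y)⁻¹ = x * y⁻¹ * w := by group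
      rw [this]; exact hl

lemma count_card (x y : Equiv.Perm (Fin 4)) (k : ℕ) :
    {z | Γk.Adj y z ∧ lvl (x * z⁻¹) = k}.ncard =
      (SL.filter (fun w => lvl (x * y⁻¹ * w) = k)).length := by
  rw [count_key, Set.ncard_image_of_injective _ (fun a b h => by
    simpa using mul_right_cancel (h : a⁻¹ * y = b⁻¹ * y))]
  have hset : {w : Equiv.Perm (Fin 4) | w ∈ SL ∧ lvl (x * y⁻¹ * w) = k} =
      ↑(SL.filter (fun w => lvl (x * y⁻¹ * w) = k)).toFinset := by
    ext w; simp [List.mem_filter, and_comm]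
  rw [hset, Set.ncard_coe_finset, List.toFinset_card_of_nodup]
  exact (by decide : SL.Nodup).filter _

lemma counts : ∀ g : Equiv.Perm (Fin 4), ∀ i : ℕ, lvl g = i →
    (i < 3 → (SL.filter (fun w => lvl (g * w) = i + 1)).length = [7, 4, 1].getD i 0) ∧
    (1 ≤ i → (SL.filter (fun w => lvl (g * w) = i - 1)).length = [1, 2, 7].getD (i - 1) 0) := by
  have key : ∀ g : Equiv.Perm (Fin 4),
      (lvl g < 3 → (SL.filter (fun w => lvl (g * w) = lvl g + 1)).length = [7,4,1].getD (lvl g) 0) ∧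
      (1 ≤ lvl g → (SL.filter (fun w => lvl (g * w) = lvl g - 1)).length = [1,2,7].getD (lvl g - 1) 0) := by
    decide
  intro g i h; subst h; exact key g

end Aux

/-- The Klein graph is a Cayley graph over `Sym(4)`: the above `7`-element set `S` is
inverse-closed, does not contain the identity, and `Cay(Sym(4), S)` is distance-regular with
intersection array `{7,4,1; 1,2,7}`. -/
theorem stmt_19 :
    (∀ s ∈ kleinConnectionSet, s⁻¹ ∈ kleinConnectionSet) ∧
    (1 : Equiv.Perm (Fin 4)) ∉ kleinConnectionSet ∧
    (cayleyGraph kleinConnectionSet).IsDRGWith [7, 4, 1] [1, 2, 7] := by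
  obtain ⟨hreach, hdist⟩ := klein_dist
  refine ⟨?_, ?_, ?_, rfl, ?_, ?_, ?_⟩
  · intro s hs
    rw [mem_klein_iff] at hs ⊢
    exact SL_inv s hs
  · rw [mem_klein_iff]; exact one_not_SL
  · exact ⟨hreach⟩
  · intro x y
    rw [hdist]
    exact lvl_le _
  · refine ⟨c[(0 : Fin 4), 1, 3], 1, ?_⟩
    rw [hdist]
    decide
  · intro i x y h
    rw [hdist] at h
    have := counts (x * y⁻¹) i h
    constructor
    · intro hi
      rw [show {z | (cayleyGraph kleinConnectionSet).Adj y z ∧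
            (cayleyGraph kleinConnectionSet).dist x z = i + 1} =
          {z | Γk.Adj y z ∧ lvl (x * z⁻¹) = i + 1} by ext z; simp [hdist, Γk]]
      rw [count_card]
      exact this.1 (by simpa using hi)
    · intro hi
      rw [show {z | (cayleyGraph kleinConnectionSet).Adj y z ∧
            (cayleyGraph kleinConnectionSet).dist x z = i - 1} =
          {z | Γk.Adj y z ∧ lvl (x * z⁻¹) = i - 1} by ext z; simp [hdist, Γk]]
      rw [count_card]
      exact this.2 hi
end
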